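/- arXiv:math/0204125 — 17 statements merged into one kernel-verified Lean document; each statement's English description precedes it below -/
import Mathlib

section
/- Let f : X → Y be a function between topological spaces such that the image of every compact subset of X is compact and the image of every connected subset of X is connected. If f is continuous, then f is preserving; conversely, if X = ℝ and Y = ℝ, any such preserving function is continuous. -/
open Filter Topology

/-- A function is *preserving* if it maps compact sets to compact sets and
connected sets to connected sets. -/
def Preserving {X Y : Type*} [TopologicalSpace X] [TopologicalSpace Y] (f : X → Y) : Prop :=
  (∀ K : Set X, IsCompact K → IsCompact (f '' K)) ∧
  (∀ C : Set X, IsPreconnected C → IsPreconnected (f '' C))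

theorem stmt0 {X Y : Type*} [TopologicalSpace X] [TopologicalSpace Y] :
    (∀ f : X → Y, Continuous f → Preserving f) ∧
    (∀ g : ℝ → ℝ, Preserving g → Continuous g) := by
  constructor
  · intro f hf
    exact ⟨fun K hK => hK.image hf, fun C hC => hC.image f hf.continuousOn⟩
  · intro g hg
    rw [continuous_iff_continuousAt]
    intro a
    by_contra hcont
    rw [Metric.continuousAt_iff] at hcont
    push_neg at hcont
    obtain ⟨ε, hε, hεbad⟩ := hcont
    -- pick a sequence x n → a with dist (g (x n)) (g a) ≥ ε
    have hx : ∀ n : ℕ, ∃ x : ℝ, dist x a < 1 / (n + 1) ∧ ε ≤ dist (g x) (g a) := by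
      intro n
      exact hεbad (1 / (n + 1)) (by positivity)
    choose x hx1 hx2 using hx
    have hxa : Tendsto x atTop (𝓝 a) := by
      have h0 : Tendsto (fun n : ℕ => x n - a) atTop (𝓝 0) := by
        apply squeeze_zero_norm (fun n => (hx1 n).le)
        exact tendsto_one_div_add_atTop_nhds_zero_nat
      have := h0.add (tendsto_const_nhds (x := a))
      simpa using this
    -- g '' (insert a (range x)) is compact, hence bounded
    have hK0 : IsCompact (insert a (Set.range x)) := hxa.isCompact_insert_range
    have hK0' : IsCompact (g '' insert a (Set.range x)) := hg.1 _ hK0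
    have hbdd : Bornology.IsBounded (g '' insert a (Set.range x)) := hK0'.isBounded
    obtain ⟨y, _, φ, hφ, hgy⟩ := tendsto_subseq_of_bounded hbdd
      (x := fun n => g (x n)) (fun n => Set.mem_image_of_mem g (Set.mem_insert_iff.2
        (Or.inr (Set.mem_range_self n))))
    have hyne : y ≠ g a := by
      intro h
      have hd : Tendsto (fun n => dist (g (x (φ n))) (g a)) atTop (𝓝 (dist y (g a))) :=
        hgy.dist tendsto_const_nhds
      have : ε ≤ dist y (g a) := ge_of_tendsto hd (Eventually.of_forall fun n => hx2 (φ n))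
      rw [h] at this
      simp at this
      linarith
    -- the intermediate values c k = y + (g a - y) / (k + 2), tending to y
    set c : ℕ → ℝ := fun k => y + (g a - y) * (1 / (k + 2)) with hc
    have hr0 : ∀ k : ℕ, (0 : ℝ) < 1 / (k + 2) := fun k => by positivity
    have hr1 : ∀ k : ℕ, (1 : ℝ) / (k + 2) < 1 := by
      intro k
      rw [div_lt_one (by positivity)]
      linarith [Nat.cast_nonneg (α := ℝ) k]
    have hcy : ∀ k, c k ≠ y := by
      intro k h
      have : (g a - y) * (1 / (k + 2)) = 0 := by simpa [hc] using h
      rcases mul_eq_zero.1 this with h' | h'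
      · exact hyne.symm (by linarith)
      · exact absurd h' (ne_of_gt (hr0 k))
    have hctend : Tendsto c atTop (𝓝 y) := by
      have h2 : Tendsto (fun k : ℕ => ((k : ℝ) + 2)) atTop atTop :=
        tendsto_atTop_add_const_right atTop 2 tendsto_natCast_atTop_atTop
      have h1 : Tendsto (fun k : ℕ => ((k : ℝ) + 2)⁻¹) atTop (𝓝 0) :=
        h2.inv_tendsto_atTop
      have h3 := (tendsto_const_nhds (x := y)).add
        ((tendsto_const_nhds (x := g a - y)).mul h1)
      simp only [hc, one_div]
      simpa using h3
    -- for each k pick t k near a with g (t k) = c k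
    have ht : ∀ k : ℕ, ∃ t : ℝ, dist t a < 1 / (k + 1) ∧ g t = c k := by
      intro k
      have hck : dist (c k) y > 0 := by
        rw [gt_iff_lt, dist_pos]; exact hcy k
      obtain ⟨n, hn1, hn2⟩ : ∃ n, k ≤ n ∧ dist (g (x (φ n))) y < dist (c k) y :=
        ((eventually_ge_atTop k).and (hgy.eventually (Metric.ball_mem_nhds y hck))).exists
      -- c k lies between g (x (φ n)) and g a
      have hbetween : c k ∈ Set.uIcc (g (x (φ n))) (g a) := by
        rw [Set.mem_uIcc]
        simp only [Real.dist_eq] at hn2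
        have habs := abs_lt.1 hn2
        have hrk0 := hr0 k
        have hrk1 := hr1 k
        rcases lt_or_gt_of_ne hyne with h | h
        · have hpos : 0 < c k - y := by simp only [hc]; nlinarith
          have habs2 : |c k - y| = c k - y := abs_of_pos hpos
          left
          constructor
          · linarith [habs.2]
          · simp only [hc]; nlinarith
        · have hneg : c k - y < 0 := by simp only [hc]; nlinarith
          have habs2 : |c k - y| = -(c k - y) := abs_of_neg hneg
          right
          constructor
          · simp only [hc]; nlinarith
          · linarith [habs.1]
      -- the image of the interval is ord-connected
      have hconn : IsPreconnected (g '' Set.uIcc (x (φ n)) a) := hg.2 _ isPreconnected_uIcc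
      have hord := hconn.ordConnected
      have hsub := hord.uIcc_subset (Set.mem_image_of_mem g Set.left_mem_uIcc)
        (Set.mem_image_of_mem g Set.right_mem_uIcc)
      obtain ⟨t, htmem, htval⟩ := hsub hbetween
      refine ⟨t, ?_, htval⟩
      have h1 : dist t a ≤ dist (x (φ n)) a := by
        rw [Set.mem_uIcc] at htmem
        rw [Real.dist_eq, Real.dist_eq]
        rcases htmem with ⟨h1, h2⟩ | ⟨h1, h2⟩ <;>
          rcases abs_cases (x (φ n) - a) with ⟨he, _⟩ | ⟨he, _⟩ <;>
          rcases abs_cases (t - a) with ⟨he', _⟩ | ⟨he', _⟩ <;> linarith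
      calc dist t a ≤ dist (x (φ n)) a := h1
        _ < 1 / (φ n + 1) := hx1 (φ n)
        _ ≤ 1 / (k + 1) := by
            apply one_div_le_one_div_of_le (by positivity)
            have hkn : ((k : ℝ)) ≤ φ n := Nat.cast_le.2 (le_trans hn1 hφ.le_apply)
            linarith
    choose t ht1 ht2 using ht
    have hta : Tendsto t atTop (𝓝 a) := by
      have h0 : Tendsto (fun n : ℕ => t n - a) atTop (𝓝 0) := by
        apply squeeze_zero_norm (fun n => (ht1 n).le)
        exact tendsto_one_div_add_atTop_nhds_zero_nat
      have := h0.add (tendsto_const_nhds (x := a))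
      simpa using this
    have hKt : IsCompact (g '' insert a (Set.range t)) := hg.1 _ hta.isCompact_insert_range
    have hymem : y ∈ g '' insert a (Set.range t) := by
      refine hKt.isClosed.mem_of_tendsto hctend ?_
      filter_upwards with k
      exact ⟨t k, Set.mem_insert_iff.2 (Or.inr (Set.mem_range_self k)), ht2 k⟩
    obtain ⟨s, hs, hsy⟩ := hymem
    rcases Set.mem_insert_iff.1 hs with rfl | ⟨k, rfl⟩
    · exact hyne hsy.symm
    · exact hcy k ((ht2 k ▸ hsy) ▸ rfl)
end

section
/- If a Tychonoff (completely regular Hausdorff) space X is not locally connected at a point p, then there exists a preserving function f : X → [0,1] (preserving compactness and connectedness) which is not continuous at p. -/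
open Filter Topology

open Set in
open scoped Classical in
theorem stmt1 {X : Type*} [TopologicalSpace X] [T35Space X] (p : X)
    (h : ∃ U : Set X, IsOpen U ∧ p ∈ U ∧ connectedComponentIn U p ∉ 𝓝 p) :
    ∃ f : X → Set.Icc (0 : ℝ) 1, Preserving f ∧ ¬ ContinuousAt f p := by
  obtain ⟨U, hUo, hpU, hUc⟩ := h
  obtain ⟨gi, hgic, hgip, hgi1⟩ :=
    CompletelyRegularSpace.completely_regular p Uᶜ hUo.isClosed_compl (by simp [hpU])
  set g : X → ℝ := fun x => (gi x : ℝ) with hg_def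
  have hgc : Continuous g := hgic.subtype_val
  have hg0 : ∀ x, 0 ≤ g x := fun x => (gi x).2.1
  have hgp : g p = 0 := by simp [hg_def, hgip]
  have hgU : ∀ x ∉ U, g x = 1 := by
    intro x hx
    have := hgi1 (Set.mem_compl hx)
    simp [hg_def, this]
  -- value functions
  set W : ℝ → ℝ := fun r => max (1/2) (min (2*r) 1) with hW_def
  set L : ℝ → ℝ := fun r => max (1 - 4*r) (W r) with hL_def
  have hWlb : ∀ r, (1/2 : ℝ) ≤ W r := fun r => le_max_left _ _
  have hWub : ∀ r, W r ≤ 1 := fun r => max_le (by norm_num) (min_le_right _ _)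
  have hW_one : ∀ r : ℝ, 1/2 ≤ r → W r = 1 := by
    intro r hr
    simp only [hW_def]
    rw [min_eq_right (by linarith), max_eq_right (by norm_num)]
  have hW_half : ∀ r : ℝ, r ≤ 1/4 → W r = 1/2 := by
    intro r hr
    simp only [hW_def]
    rw [min_eq_left (by linarith), max_eq_left (by linarith)]
  have hL_eqW : ∀ r : ℝ, 1/8 ≤ r → L r = W r := by
    intro r hr
    simp only [hL_def]
    exact max_eq_right (le_trans (by linarith) (hWlb r))
  have hLub : ∀ r : ℝ, 0 ≤ r → L r ≤ 1 := by
    intro r hr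
    exact max_le (by linarith) (hWub r)
  have hL0 : L 0 = 1 := by
    simp only [hL_def]
    rw [max_eq_left]
    · norm_num
    · calc W 0 ≤ 1 := hWub 0
        _ = 1 - 4*0 := by norm_num
  -- the open set V and the component C
  set V : Set X := {x | g x < 1/2} with hV_def
  have hVo : IsOpen V := isOpen_lt hgc continuous_const
  have hpV : p ∈ V := by simp [hV_def, hgp]
  have hVU : V ⊆ U := by
    intro x hx
    by_contra hxu
    have := hgU x hxu
    simp only [hV_def, Set.mem_setOf_eq] at hx
    linarith
  set C : Set X := connectedComponentIn V p with hC_def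
  have hCV : C ⊆ V := connectedComponentIn_subset _ _
  have hpC : p ∈ C := mem_connectedComponentIn hpV
  have hCco : IsPreconnected C := isPreconnected_connectedComponentIn
  -- C is closed in V
  have hCcl : closure C ∩ V ⊆ C := by
    rintro z ⟨hzc, hzv⟩
    have hD : IsPreconnected (insert z C) :=
      hCco.subset_closure (Set.subset_insert _ _)
        (Set.insert_subset_iff.mpr ⟨hzc, subset_closure⟩)
    have := hD.subset_connectedComponentIn (Set.mem_insert_iff.mpr (Or.inr hpC))
      (Set.insert_subset_iff.mpr ⟨hzv, hCV⟩)
    exact this (Set.mem_insert _ _)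
  have hclV : ∀ z ∈ closure C, g z ≤ 1/2 := by
    intro z hz
    have h1 : closure C ⊆ {x | g x ≤ 1/2} := by
      apply closure_minimal _ (isClosed_le hgc continuous_const)
      intro x hx
      have hx2 : g x < 1/2 := hCV hx
      show g x ≤ 1/2
      linarith
    exact h1 hz
  -- the function
  set f₀ : X → ℝ := fun x => if x ∈ C then L (g x) else W (g x) with hf₀_def
  have hfWle : ∀ x, W (g x) ≤ f₀ x := by
    intro x
    simp only [hf₀_def]
    split
    · exact le_max_right _ _
    · exact le_rfl
  have hf₀lb : ∀ x, (1/2 : ℝ) ≤ f₀ x := fun x => le_trans (hWlb _) (hfWle x)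
  have hf₀ub : ∀ x, f₀ x ≤ 1 := by
    intro x
    simp only [hf₀_def]
    split
    · exact hLub _ (hg0 x)
    · exact hWub _
  have hf_notC : ∀ x ∉ C, f₀ x = W (g x) := by
    intro x hx; simp only [hf₀_def, if_neg hx]
  have hf_C : ∀ x ∈ C, f₀ x = L (g x) := by
    intro x hx; simp only [hf₀_def, if_pos hx]
  have hf_notV : ∀ x ∉ V, f₀ x = 1 := by
    intro x hx
    have hxC : x ∉ C := fun hc => hx (hCV hc)
    rw [hf_notC x hxC, hW_one _ (le_of_not_gt hx)]
  -- f₀ = L ∘ g on closure C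
  have hf_clC : ∀ z ∈ closure C, f₀ z = L (g z) := by
    intro z hz
    by_cases hzC : z ∈ C
    · exact hf_C z hzC
    · have hzV : z ∉ V := fun hv => hzC (hCcl ⟨hz, hv⟩)
      have hg2 : g z = 1/2 := le_antisymm (hclV z hz) (le_of_not_gt hzV)
      rw [hf_notC z hzC, hg2, hL_eqW _ (by norm_num)]
  have hWc : Continuous fun x => W (g x) := by
    apply Continuous.max continuous_const
    exact Continuous.min (continuous_const.mul hgc) continuous_const
  have hLc : Continuous fun x => L (g x) := by
    apply Continuous.max _ hWc
    exact continuous_const.sub (continuous_const.mul hgc)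
  set f : X → Set.Icc (0 : ℝ) 1 :=
    fun x => ⟨f₀ x, ⟨le_trans (by norm_num) (hf₀lb x), hf₀ub x⟩⟩ with hf_def
  have hval : ∀ s : Set X, Subtype.val '' (f '' s) = f₀ '' s := by
    intro s
    rw [Set.image_image]
  refine ⟨f, ⟨?_, ?_⟩, ?_⟩
  · -- compactness preserving
    intro K hK
    rw [Topology.IsEmbedding.subtypeVal.isCompact_iff, hval]
    have hKcl : IsClosed K := hK.isClosed
    have hE : IsCompact (closure (K ∩ (V \ C))) :=
      hK.of_isClosed_subset isClosed_closure
        (closure_minimal Set.inter_subset_left hKcl)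
    have h1 : IsCompact ((fun x => L (g x)) '' (K ∩ closure C)) :=
      (hK.inter_right isClosed_closure).image hLc
    have h2 : IsCompact ((fun x => W (g x)) '' (K \ V)) :=
      (hK.diff hVo).image hWc
    have h3 : IsCompact ((fun x => W (g x)) '' closure (K ∩ (V \ C))) := hE.image hWc
    have heq : f₀ '' K =
        ((fun x => L (g x)) '' (K ∩ closure C)) ∪
        ((fun x => W (g x)) '' (K \ V)) ∪
        ((fun x => W (g x)) '' closure (K ∩ (V \ C))) := by
      apply Set.Subset.antisymm
      · rintro t ⟨x, hxK, rfl⟩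
        by_cases hxC : x ∈ C
        · exact Or.inl (Or.inl ⟨x, ⟨hxK, subset_closure hxC⟩, (hf_C x hxC).symm⟩)
        · by_cases hxV : x ∈ V
          · exact Or.inr ⟨x, subset_closure ⟨hxK, hxV, hxC⟩, (hf_notC x hxC).symm⟩
          · exact Or.inl (Or.inr ⟨x, ⟨hxK, hxV⟩, (hf_notC x hxC).symm⟩)
      · rintro t ((⟨z, ⟨hzK, hzc⟩, rfl⟩ | ⟨z, ⟨hzK, hzV⟩, rfl⟩) | ⟨z, hz, rfl⟩)
        · exact ⟨z, hzK, hf_clC z hzc⟩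
        · have hzC : z ∉ C := fun hc => hzV (hCV hc)
          exact ⟨z, hzK, hf_notC z hzC⟩
        · have hzK : z ∈ K := closure_minimal Set.inter_subset_left hKcl hz
          by_cases hzC : z ∈ C
          · by_cases h8 : (1/8 : ℝ) ≤ g z
            · exact ⟨z, hzK, by rw [hf_C z hzC, hL_eqW _ h8]⟩
            · push_neg at h8
              have hWz : W (g z) = 1/2 := hW_half _ (by linarith)
              have hzO : z ∈ {x | g x < 1/8} := h8
              obtain ⟨y, hyO, hyK, hyV, hyC⟩ :=
                mem_closure_iff.mp hz {x | g x < 1/8} (isOpen_lt hgc continuous_const) hzO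
              have hgy : g y < 1/8 := hyO
              refine ⟨y, hyK, ?_⟩
              show f₀ y = W (g z)
              rw [hf_notC y hyC, hW_half _ (by linarith), hWz]
          · exact ⟨z, hzK, hf_notC z hzC⟩
    rw [heq]
    exact (h1.union h2).union h3
  · -- connectedness preserving
    intro S hS
    rw [← Topology.IsInducing.subtypeVal.isPreconnected_image, hval]
    by_cases hSC : (S ∩ C).Nonempty
    · by_cases hSsub : S ⊆ C
      · have : f₀ '' S = (fun x => L (g x)) '' S :=
          Set.image_congr fun x hx => hf_C x (hSsub hx)
        rw [this]
        exact hS.image _ hLc.continuousOn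
      · -- main case
        obtain ⟨x₀, hx₀S, hx₀C⟩ := hSC
        obtain ⟨x₁, hx₁S, hx₁C⟩ := Set.not_subset.mp hSsub
        have hSV : ¬ S ⊆ V := by
          intro hsv
          have h1 : S ⊆ connectedComponentIn V x₀ :=
            hS.subset_connectedComponentIn hx₀S hsv
          have h2 : connectedComponentIn V p = connectedComponentIn V x₀ :=
            connectedComponentIn_eq (show x₀ ∈ connectedComponentIn V p from hx₀C)
          have h3 : x₁ ∈ connectedComponentIn V p := h2.symm ▸ h1 hx₁S
          exact hx₁C h3
        obtain ⟨z, hzS, hzV⟩ := Set.not_subset.mp hSV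
        have hfz : f₀ z = 1 := hf_notV z hzV
        have hgz : 1/2 ≤ g z := le_of_not_gt hzV
        rw [isPreconnected_iff_ordConnected]
        have hgSoc : Set.OrdConnected (g '' S) :=
          (hS.image g hgc.continuousOn).ordConnected
        constructor
        rintro a ⟨x, hxS, rfl⟩ b ⟨y, hyS, rfl⟩ s hs
        rcases eq_or_lt_of_le hs.1 with heq | hlt
        · exact ⟨x, hxS, heq⟩
        · have hs1 : s ≤ 1 := le_trans hs.2 (hf₀ub y)
          rcases eq_or_lt_of_le hs1 with h1 | h1
          · exact ⟨z, hzS, by rw [hfz, h1]⟩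
          · -- 1/2 ≤ f₀ x < s < 1
            have hshalf : (1/2 : ℝ) < s := lt_of_le_of_lt (hf₀lb x) hlt
            have hgx : g x ≤ s / 2 := by
              by_contra hc
              push_neg at hc
              have h2 : min (2 * g x) 1 > s := lt_min (by linarith) h1
              have h3 : W (g x) > s := lt_of_lt_of_le h2 (le_max_right _ _)
              have := hfWle x
              linarith
            have hmem : s / 2 ∈ g '' S := by
              apply hgSoc.out ⟨x, hxS, rfl⟩ ⟨z, hzS, rfl⟩
              exact ⟨hgx, by linarith⟩
            obtain ⟨y', hy'S, hy'⟩ := hmem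
            have hWy : W (g y') = s := by
              rw [hy']
              simp only [hW_def]
              rw [min_eq_left (by linarith), max_eq_right (by linarith)]
              ring_nf
            refine ⟨y', hy'S, ?_⟩
            by_cases hy'C : y' ∈ C
            · rw [hf_C y' hy'C, hL_eqW, hWy]
              rw [hy']; linarith
            · rw [hf_notC y' hy'C, hWy]
    · have hSnC : ∀ x ∈ S, x ∉ C := by
        intro x hx hc
        exact hSC ⟨x, hx, hc⟩
      have : f₀ '' S = (fun x => W (g x)) '' S :=
        Set.image_congr fun x hx => hf_notC x (hSnC x hx)
      rw [this]
      exact hS.image _ hWc.continuousOn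
  · -- discontinuity at p
    intro hcont
    have hc0 : ContinuousAt f₀ p := by
      have : f₀ = (fun y : Set.Icc (0:ℝ) 1 => (y : ℝ)) ∘ f := rfl
      rw [this]
      exact continuous_subtype_val.continuousAt.comp hcont
    have hfp : f₀ p = 1 := by rw [hf_C p hpC, hgp, hL0]
    have hN : {x | 3/4 < f₀ x} ∈ 𝓝 p := by
      have := hc0.preimage_mem_nhds (Ioi_mem_nhds (by rw [hfp]; norm_num : f₀ p ∈ Set.Ioi (3/4 : ℝ)))
      simpa [Set.preimage] using this
    have hO : {x | g x < 1/8} ∈ 𝓝 p :=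
      (isOpen_lt hgc continuous_const).mem_nhds (by simp [hgp])
    have hCn : C ∈ 𝓝 p := by
      apply mem_of_superset (inter_mem hN hO)
      rintro x ⟨hx1, hx2⟩
      by_contra hxC
      have hgx : g x < 1/8 := hx2
      have : f₀ x = 1/2 := by
        rw [hf_notC x hxC, hW_half _ (by linarith)]
      simp only [Set.mem_setOf_eq] at hx1
      linarith
    exact hUc (mem_of_superset hCn (connectedComponentIn_mono p hVU))
end

section
/- Suppose f : X → Y is a preserving function into a completely regular Hausdorff space Y, and f is not continuous at p ∈ X. Then there exists a preserving function h : X → [0,1] which is not continuous at p. -/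
open Filter Topology

theorem stmt2 {X Y : Type*} [TopologicalSpace X] [TopologicalSpace Y] [T35Space Y]
    (f : X → Y) (hf : Preserving f) (p : X) (hp : ¬ ContinuousAt f p) :
    ∃ h : X → Set.Icc (0 : ℝ) 1, Preserving h ∧ ¬ ContinuousAt h p := by
  rw [ContinuousAt, Tendsto] at hp
  have : ∃ s ∈ 𝓝 (f p), f ⁻¹' s ∉ 𝓝 p := by
    by_contra hcon
    push_neg at hcon
    exact hp fun s hs => hcon s hs
  obtain ⟨s, hs, hsp⟩ := this
  obtain ⟨U, hUs, hUopen, hfpU⟩ := mem_nhds_iff.mp hs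
  have hU : f ⁻¹' U ∉ 𝓝 p := fun h => hsp (mem_of_superset h (Set.preimage_mono hUs))
  obtain ⟨g, hg, hg0, hg1⟩ :=
    CompletelyRegularSpace.completely_regular (f p) Uᶜ hUopen.isClosed_compl
      (by simp [hfpU])
  refine ⟨g ∘ f, ⟨?_, ?_⟩, ?_⟩
  · intro K hK
    rw [Set.image_comp]
    exact (hf.1 K hK).image hg
  · intro C hC
    rw [Set.image_comp]
    exact (hf.2 C hC).image g hg.continuousOn
  · intro hc
    apply hU
    have hV : {x : unitInterval | (x : ℝ) < 1} ∈ 𝓝 (g (f p)) := by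
      have : IsOpen {x : unitInterval | (x : ℝ) < 1} :=
        isOpen_lt continuous_subtype_val continuous_const
      exact this.mem_nhds (by simp [hg0])
    have hmem := hc hV
    refine mem_of_superset hmem ?_
    intro x hx
    by_contra hxU
    have h1 := hg1 hxU
    simp only [Function.comp, Set.mem_preimage, Set.mem_setOf_eq, h1] at hx
    exact lt_irrefl _ hx
end

section
/- Let f : X → Y be a compactness preserving function into a Hausdorff space Y, and let M ⊆ X be a set whose closure is compact and with f(M) infinite. Then every accumulation point y of f(M) has the form y = f(x) for some accumulation point x of M; that is, (f(M))' ⊆ f(M'). -/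
open Filter Topology

theorem stmt3 {X Y : Type*} [TopologicalSpace X] [TopologicalSpace Y] [T2Space Y]
    (f : X → Y) (hf : ∀ K : Set X, IsCompact K → IsCompact (f '' K))
    (M : Set X) (hM : IsCompact (closure M)) (hMinf : (f '' M).Infinite) :
    ∀ y : Y, AccPt y (𝓟 (f '' M)) → ∃ x : X, AccPt x (𝓟 M) ∧ f x = y := by
  intro y hy
  by_contra hcon
  push_neg at hcon
  -- every point mapping to y has an open neighborhood meeting M in at most itself
  have hU : ∀ x : X, f x = y → ∃ U : Set X, IsOpen U ∧ x ∈ U ∧ U ∩ M ⊆ {x} := by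
    intro x hx
    have hnacc : ¬ AccPt x (𝓟 M) := fun h => hcon x h hx
    rw [accPt_iff_nhds] at hnacc
    push_neg at hnacc
    obtain ⟨U, hUx, hUall⟩ := hnacc
    obtain ⟨V, hVU, hVopen, hxV⟩ := mem_nhds_iff.mp hUx
    refine ⟨V, hVopen, hxV, fun z hz => ?_⟩
    exact hUall z ⟨hVU hz.1, hz.2⟩
  classical
  set T : Set X := {x | f x = y} with hT
  set W : Set X := ⋃ x : T, (hU x.1 x.2).choose with hW
  have hWopen : IsOpen W := isOpen_iUnion fun x => (hU x.1 x.2).choose_spec.1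
  have hTW : T ⊆ W := fun x hx =>
    Set.mem_iUnion.mpr ⟨⟨x, hx⟩, (hU x hx).choose_spec.2.1⟩
  set C : Set X := closure M \ W with hC
  have hCcomp : IsCompact C := hM.diff hWopen
  have hfC : IsCompact (f '' C) := hf C hCcomp
  have hfCclosed : IsClosed (f '' C) := hfC.isClosed
  have hynot : y ∉ f '' C := by
    rintro ⟨c, hc, rfl⟩
    exact hc.2 (hTW (show c ∈ T from rfl))
  have hVnhds : (f '' C)ᶜ ∈ 𝓝 y := hfCclosed.isOpen_compl.mem_nhds hynot
  obtain ⟨z, ⟨hzV, m, hmM, rfl⟩, hzny⟩ := accPt_iff_nhds.mp hy _ hVnhds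
  have hmnC : m ∉ C := fun h => hzV ⟨m, h, rfl⟩
  have hmW : m ∈ W := by
    by_contra h
    exact hmnC ⟨subset_closure hmM, h⟩
  obtain ⟨⟨x, hx⟩, hmUx⟩ := Set.mem_iUnion.mp hmW
  have : m = x := (hU x hx).choose_spec.2.2 ⟨hmUx, hmM⟩
  exact hzny (this ▸ hx)
end

section
/- If f : X → Y preserves connectedness, Y is a T₁ space, and C ⊆ X is connected, then f(closure(C)) ⊆ closure(f(C)). -/
open Filter Topology

theorem stmt5 {X Y : Type*} [TopologicalSpace X] [TopologicalSpace Y] [T1Space Y]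
    (f : X → Y) (hf : ∀ C : Set X, IsPreconnected C → IsPreconnected (f '' C))
    (C : Set X) (hC : IsPreconnected C) :
    f '' closure C ⊆ closure (f '' C) := by
  rintro y ⟨x, hx, rfl⟩
  by_contra hy
  have hfx : f x ∉ f '' C := fun h => hy (subset_closure h)
  rcases C.eq_empty_or_nonempty with h | ⟨c, hc⟩
  · subst h; simp at hx
  have hS : IsPreconnected (insert x C) :=
    hC.subset_closure (Set.subset_insert _ _)
      (Set.insert_subset hx subset_closure)
  have hS' := hf _ hS
  rw [Set.image_insert_eq] at hS'
  obtain ⟨z, hzS, hzU, hzV⟩ := hS' (closure (f '' C))ᶜ {f x}ᶜ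
    isClosed_closure.isOpen_compl isClosed_singleton.isOpen_compl
    (by
      rintro w (rfl | hw)
      · exact Or.inl hy
      · exact Or.inr fun hww => hfx (hww ▸ hw))
    ⟨f x, Set.mem_insert _ _, hy⟩
    ⟨f c, Set.mem_insert_of_mem _ ⟨c, hc, rfl⟩,
      fun hcc => hfx (hcc ▸ ⟨c, hc, rfl⟩)⟩
  rcases hzS with rfl | hz
  · exact hzV rfl
  · exact hzU (subset_closure hz)
end

section
/- Let f : X → Y be a connectedness preserving function from a locally connected space X into a T₁ space Y. If F ⊆ Y is closed and p lies in the closure of f⁻¹(F) but not in f⁻¹(F), then p lies in the closure of the set of points x ∈ f⁻¹(F) at which f is not locally constant. -/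
open Filter Topology

/-- `f` is locally constant at `x` if it is constant on some neighbourhood of `x`. -/
def LocallyConstantAt {X Y : Type*} [TopologicalSpace X] (f : X → Y) (x : X) : Prop :=
  ∃ U ∈ 𝓝 x, ∀ z ∈ U, f z = f x

theorem two_point_not_preconnected {Y : Type*} [TopologicalSpace Y] [T1Space Y]
    {a b : Y} (h : a ≠ b) : ¬ IsPreconnected ({a, b} : Set Y) := by
  intro h'
  obtain ⟨y, hy⟩ := h' {b}ᶜ {a}ᶜ isOpen_compl_singleton isOpen_compl_singleton
    (by intro y hy; rcases hy with rfl | rfl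
        · exact Or.inl h
        · exact Or.inr (Ne.symm h))
    ⟨a, Or.inl rfl, h⟩ ⟨b, Or.inr rfl, Ne.symm h⟩
  rcases hy.1 with rfl | rfl
  · exact hy.2.2 rfl
  · exact hy.2.1 rfl

theorem stmt6 {X Y : Type*} [TopologicalSpace X] [TopologicalSpace Y]
    [LocallyConnectedSpace X] [T1Space Y]
    (f : X → Y) (hf : ∀ C : Set X, IsPreconnected C → IsPreconnected (f '' C))
    (F : Set Y) (hF : IsClosed F) (p : X)
    (hp : p ∈ closure (f ⁻¹' F)) (hp' : p ∉ f ⁻¹' F) :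
    p ∈ closure {x | x ∈ f ⁻¹' F ∧ ¬ LocallyConstantAt f x} := by
  rw [mem_closure_iff_nhds] at hp ⊢
  intro U hU
  obtain ⟨V, hVU, hVopen, hpV, hVconn⟩ :=
    locallyConnectedSpace_iff_subsets_isOpen_isConnected.mp ‹_› p U hU
  obtain ⟨x, hxV, hxF⟩ := hp V (hVopen.mem_nhds hpV)
  by_contra hcon
  push_neg at hcon
  -- every point of V ∩ f⁻¹ F is a point of local constancy
  have hlc : ∀ z ∈ V, f z ∈ F → LocallyConstantAt f z := by
    intro z hzV hzF
    by_contra h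
    have hz : z ∈ U ∩ {x | x ∈ f ⁻¹' F ∧ ¬ LocallyConstantAt f x} := ⟨hVU hzV, hzF, h⟩
    rw [hcon] at hz
    exact hz
  -- S : points of V where f equals f x
  set S : Set X := V ∩ f ⁻¹' {f x} with hS
  have hxS : x ∈ S := ⟨hxV, rfl⟩
  have hSopen : IsOpen S := by
    rw [isOpen_iff_mem_nhds]
    rintro z ⟨hzV, hzfx⟩
    have hzF : f z ∈ F := by rw [Set.mem_preimage, Set.mem_singleton_iff] at hzfx; rw [hzfx]; exact hxF
    obtain ⟨W, hW, hWconst⟩ := hlc z hzV hzF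
    have : W ∩ V ∈ 𝓝 z := inter_mem hW (hVopen.mem_nhds hzV)
    filter_upwards [this] with w ⟨hwW, hwV⟩
    refine ⟨hwV, ?_⟩
    simp only [Set.mem_preimage, Set.mem_singleton_iff]
    rw [hWconst w hwW]
    exact hzfx
  set K := connectedComponentIn S x with hK
  have hKopen : IsOpen K := hSopen.connectedComponentIn
  have hKsub : K ⊆ S := connectedComponentIn_subset S x
  have hxK : x ∈ K := mem_connectedComponentIn hxS
  have hKconn : IsPreconnected K := isPreconnected_connectedComponentIn
  -- f = f x on K
  have hKconst : ∀ z ∈ K, f z = f x := fun z hz => (hKsub hz).2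
  by_cases hcl : ∃ z ∈ V, z ∈ closure K ∧ z ∉ K
  · obtain ⟨z, hzV, hzcl, hzK⟩ := hcl
    have hins : IsPreconnected (insert z K) :=
      hKconn.subset_closure (Set.subset_insert z K)
        (Set.insert_subset hzcl subset_closure)
    have hzfx : f z ≠ f x := by
      intro h
      have hzS : z ∈ S := ⟨hzV, by simpa using h⟩
      have : insert z K ⊆ K :=
        hins.subset_connectedComponentIn (Set.mem_insert_of_mem z hxK) (Set.insert_subset hzS hKsub)
      exact hzK (this (Set.mem_insert z K))
    have himg : f '' insert z K ⊆ {f z, f x} := by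
      rintro _ ⟨w, hw, rfl⟩
      rcases hw with rfl | hw
      · exact Or.inl rfl
      · exact Or.inr (hKconst w hw)
    have himg' : f '' insert z K = {f z, f x} := by
      apply Set.Subset.antisymm himg
      rintro y (rfl | rfl)
      · exact ⟨z, Set.mem_insert z K, rfl⟩
      · exact ⟨x, Set.mem_insert_of_mem z hxK, rfl⟩
    have := hf _ hins
    rw [himg'] at this
    exact two_point_not_preconnected hzfx this
  · push_neg at hcl
    -- V ⊆ K ∪ (closure K)ᶜ
    have hsub : V ⊆ K ∪ (closure K)ᶜ := by
      intro z hz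
      by_cases h : z ∈ K
      · exact Or.inl h
      · exact Or.inr (fun hc => h (hcl z hz hc))
    have h1 : (V ∩ K).Nonempty := ⟨x, hxV, hxK⟩
    have h2 : ¬ (V ∩ (closure K)ᶜ).Nonempty := by
      intro ⟨z, hzV, hzc⟩
      -- then V preconn splits
      obtain ⟨w, hw⟩ := hVconn.isPreconnected K (closure K)ᶜ hKopen
        (isClosed_closure).isOpen_compl hsub h1 ⟨z, hzV, hzc⟩
      exact hw.2.2 (subset_closure hw.2.1)
    -- so V ⊆ closure K, hence V ⊆ K, hence f p = f x ∈ F, contra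
    have hVK : V ⊆ K := by
      intro z hz
      by_contra h
      exact h2 ⟨z, hz, fun hc => h (hcl z hz hc)⟩
    exact hp' (by rw [Set.mem_preimage, (hKsub (hVK hpV)).2]; exact hxF)
end

section
/- Let f : X → Y be a connectedness preserving function into a T₁ space Y. If X is locally connected at p and f is not locally constant at p, then f(U) ∩ V is infinite for every neighbourhood U of p and every neighbourhood V of f(p). -/
open Filter Topology

theorem stmt7 {X Y : Type*} [TopologicalSpace X] [TopologicalSpace Y] [T1Space Y]
    (f : X → Y) (hf : ∀ C : Set X, IsPreconnected C → IsPreconnected (f '' C))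
    (p : X)
    (hlc : ∀ U ∈ 𝓝 p, ∃ V ∈ 𝓝 p, V ⊆ U ∧ IsConnected V)
    (hnc : ¬ LocallyConstantAt f p) :
    ∀ U ∈ 𝓝 p, ∀ V ∈ 𝓝 (f p), (f '' U ∩ V).Infinite := by
  intro U hU V hV
  obtain ⟨W, hW, hWU, hWc⟩ := hlc U hU
  set C := f '' W with hC
  have hCpre : IsPreconnected C := hf W hWc.isPreconnected
  have hpW : p ∈ W := mem_of_mem_nhds hW
  have hfpC : f p ∈ C := ⟨p, hpW, rfl⟩
  obtain ⟨z, hzW, hz⟩ : ∃ z ∈ W, f z ≠ f p := by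
    by_contra h
    push_neg at h
    exact hnc ⟨W, hW, h⟩
  have hzC : f z ∈ C := ⟨z, hzW, rfl⟩
  have key : (C ∩ V).Infinite := by
    by_contra hfin
    rw [Set.not_infinite] at hfin
    set F := (C ∩ V) \ {f p} with hF
    have hFfin : F.Finite := hfin.subset Set.diff_subset
    have hfpF : f p ∉ F := fun h => h.2 rfl
    have hV' : V \ F ∈ 𝓝 (f p) :=
      Filter.inter_mem hV (hFfin.isClosed.isOpen_compl.mem_nhds hfpF)
    obtain ⟨c, hcC, hc1, hc2⟩ :=
      hCpre (interior (V \ F)) ({f p}ᶜ) isOpen_interior isOpen_compl_singleton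
        (fun c hcC => by
          by_cases hcp : c = f p
          · exact Or.inl (hcp ▸ mem_interior_iff_mem_nhds.2 hV')
          · exact Or.inr hcp)
        ⟨f p, hfpC, mem_interior_iff_mem_nhds.2 hV'⟩
        ⟨f z, hzC, hz⟩
    have hcVF : c ∈ V \ F := interior_subset hc1
    exact hcVF.2 ⟨⟨hcC, hcVF.1⟩, hc2⟩
  exact key.mono (Set.inter_subset_inter_left V (Set.image_mono (f := f) hWU))
end

section
/- Every nonempty open subset of an infinite connected regular (T₃) space is uncountable. -/
open Filter Topology

/-- A countable set of reals misses some point of `Ioo 0 1`. -/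
lemma exists_gap_aux {s : Set ℝ} (hs : s.Countable) :
    ∃ r ∈ Set.Ioo (0 : ℝ) 1, r ∉ s := by
  by_contra h
  push_neg at h
  have hsub : Set.Ioo (0 : ℝ) 1 ⊆ s := fun r hr => h r hr
  have hcnt : (Set.Ioo (0 : ℝ) 1).Countable := hs.mono hsub
  have hle : Cardinal.mk (Set.Ioo (0 : ℝ) 1) ≤ Cardinal.aleph0 :=
    hcnt.le_aleph0
  rw [Cardinal.mk_Ioo_real (by norm_num : (0:ℝ) < 1)] at hle
  exact absurd hle (not_le.mpr Cardinal.aleph0_lt_continuum)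

theorem stmt9 {Z : Type*} [TopologicalSpace Z] [T3Space Z] [Infinite Z] [ConnectedSpace Z]
    (G : Set Z) (hG : IsOpen G) (hne : G.Nonempty) : ¬ G.Countable := by
  intro hC
  by_cases hZ : (Set.univ : Set Z).Countable
  · -- the whole space is countable, hence Lindelöf, hence normal
    have : Countable Z := Set.countable_univ_iff.mp hZ
    obtain ⟨a, b, hab⟩ := exists_pair_ne Z
    obtain ⟨f, hf0, hf1, hf01⟩ :=
      exists_continuous_zero_one_of_isClosed (isClosed_singleton (x := a))
        (isClosed_singleton (x := b)) (by simp [hab])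
    obtain ⟨r, hr, hrf⟩ := exists_gap_aux (Set.countable_range f)
    set V := f ⁻¹' (Set.Iio r) with hV
    have hopen : IsOpen V := (isOpen_Iio).preimage f.continuous
    have hclosed : IsClosed V := by
      rw [← closure_subset_iff_isClosed]
      intro z hz
      have h1 : f z ∈ closure (Set.Iio r) :=
        f.continuous.closure_preimage_subset _ hz
      rw [closure_Iio] at h1
      have : f z ≠ r := fun h => hrf ⟨z, h⟩
      exact lt_of_le_of_ne h1 this
    rcases isClopen_iff.mp ⟨hclosed, hopen⟩ with h | h
    · have : a ∈ V := by
        simp only [hV, Set.mem_preimage, Set.mem_Iio, hf0 rfl]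
        exact hr.1
      rw [h] at this; exact this
    · have : b ∈ V := h ▸ Set.mem_univ b
      simp only [hV, Set.mem_preimage, Set.mem_Iio] at this
      rw [hf1 rfl] at this
      exact absurd this (not_lt.mpr hr.2.le)
  · -- the whole space is uncountable, so pick y ∉ G
    obtain ⟨y, -, hy⟩ : ∃ y ∈ Set.univ, y ∉ G := by
      by_contra h
      push_neg at h
      exact hZ (hC.mono fun z _ => h z (Set.mem_univ z))
    obtain ⟨x, hx⟩ := hne
    obtain ⟨t, ht, htc, hts⟩ := exists_mem_nhds_isClosed_subset (hG.mem_nhds hx)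
    have hxt : x ∈ t := mem_of_mem_nhds ht
    have hxint : x ∈ interior t := mem_interior_iff_mem_nhds.mpr ht
    have htcnt : Countable ↥t := (hC.mono hts).to_subtype
    -- closed sets in the countable (hence normal) subspace t
    have hC1 : IsClosed ({⟨x, hxt⟩} : Set ↥t) := isClosed_singleton
    have hC2 : IsClosed ((Subtype.val ⁻¹' (interior t)ᶜ) : Set ↥t) :=
      (isOpen_interior.isClosed_compl).preimage continuous_subtype_val
    have hdisj : Disjoint ({⟨x, hxt⟩} : Set ↥t) (Subtype.val ⁻¹' (interior t)ᶜ) := by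
      rw [Set.disjoint_singleton_left]
      simp [hxint]
    obtain ⟨f, hf0, hf1, hf01⟩ := exists_continuous_zero_one_of_isClosed hC1 hC2 hdisj
    obtain ⟨r, hr, hrf⟩ := exists_gap_aux (Set.countable_range f)
    set V : Set Z := Subtype.val '' (f ⁻¹' Set.Iio r) with hVdef
    have hVt : V ⊆ t := by rintro z ⟨w, -, rfl⟩; exact w.2
    have hVint : V ⊆ interior t := by
      rintro z ⟨w, hw, rfl⟩
      by_contra hz
      have h2 : f w < r := hw
      rw [hf1 hz] at h2
      exact absurd h2 (not_lt.mpr hr.2.le)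
    have hopen : IsOpen V := by
      have : IsOpen (f ⁻¹' Set.Iio r) := (isOpen_Iio).preimage f.continuous
      obtain ⟨W, hW, hWeq⟩ := isOpen_induced_iff.mp this
      have himg : V = W ∩ t := by
        rw [hVdef, ← hWeq, Subtype.image_preimage_coe]
        exact Set.inter_comm _ _
      have : V = W ∩ interior t := by
        apply Set.Subset.antisymm
        · exact Set.subset_inter (himg ▸ Set.inter_subset_left) hVint
        · rw [himg]
          exact Set.inter_subset_inter_right W interior_subset
      rw [this]
      exact hW.inter isOpen_interior
    have hclosed : IsClosed V := by
      rw [← closure_subset_iff_isClosed]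
      intro z hz
      have hzt : z ∈ t := htc.closure_subset_iff.mpr hVt hz
      set w : ↥t := ⟨z, hzt⟩ with hw
      have hwcl : w ∈ closure (f ⁻¹' Set.Iio r) := by
        rw [Topology.IsEmbedding.subtypeVal.closure_eq_preimage_closure_image]
        exact hz
      have h1 : f w ∈ closure (Set.Iio r) :=
        f.continuous.closure_preimage_subset _ hwcl
      rw [closure_Iio] at h1
      have hne' : f w ≠ r := fun h => hrf ⟨w, h⟩
      exact ⟨w, Set.mem_Iio.mpr (lt_of_le_of_ne h1 hne'), rfl⟩
    rcases isClopen_iff.mp ⟨hclosed, hopen⟩ with h | h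
    · have : x ∈ V := ⟨⟨x, hxt⟩, by simp [hf0 rfl, hr.1], rfl⟩
      rw [h] at this; exact this
    · exact hy (hts (hVt (h ▸ Set.mem_univ y)))
end

section
/- Let X be a topological space and x a point that is both a Fréchet–Urysohn point and a sequentially connectible (SC) point. Then X is locally connected at x. -/
open Filter Topology

/-- `x` is a sequentially connectible (SC) point. -/
def SCPoint {X : Type*} [TopologicalSpace X] (x : X) : Prop :=
  ∀ u : ℕ → X, Tendsto u atTop (𝓝 x) →
    ∃ φ : ℕ → ℕ, StrictMono φ ∧ ∃ C : ℕ → Set X,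
      (∀ k, IsPreconnected (C k) ∧ u (φ k) ∈ C k ∧ x ∈ C k) ∧
      ∀ U ∈ 𝓝 x, ∀ᶠ k in atTop, C k ⊆ U

/-- `x` is a Fréchet–Urysohn point. -/
def FrechetPoint {X : Type*} [TopologicalSpace X] (x : X) : Prop :=
  ∀ A : Set X, x ∈ closure A →
    ∃ u : ℕ → X, (∀ n, u n ∈ A) ∧ Tendsto u atTop (𝓝 x)

theorem stmt10 {X : Type*} [TopologicalSpace X] (x : X)
    (hF : FrechetPoint x) (hSC : SCPoint x) :
    ∀ U ∈ 𝓝 x, ∃ V ∈ 𝓝 x, V ⊆ U ∧ IsConnected V := by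
  intro U hU
  set W := interior U with hW
  have hWo : IsOpen W := isOpen_interior
  have hxW : x ∈ W := mem_interior_iff_mem_nhds.2 hU
  set c : Set (Set X) := {C | C ⊆ W ∧ IsPreconnected C ∧ x ∈ C} with hc
  set V : Set X := ⋃₀ c with hV
  have hVpre : IsPreconnected V :=
    isPreconnected_sUnion x c (fun s hs => hs.2.2) fun s hs => hs.2.1
  have hxV : x ∈ V := ⟨{x}, ⟨by simpa using hxW, isPreconnected_singleton, rfl⟩, rfl⟩
  have hVW : V ⊆ W := fun y hy => by
    obtain ⟨s, hs, hys⟩ := hy; exact hs.1 hys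
  refine ⟨V, ?_, hVW.trans interior_subset, ⟨⟨x, hxV⟩, hVpre⟩⟩
  by_contra hVn
  have hxcl : x ∈ closure (Vᶜ ∩ W) := by
    have hx : x ∈ closure Vᶜ := by
      rw [closure_compl]
      intro h
      exact hVn (mem_interior_iff_mem_nhds.1 h)
    rw [mem_closure_iff] at hx ⊢
    intro o ho hxo
    obtain ⟨y, hy1, hy2⟩ := hx (o ∩ W) (ho.inter hWo) ⟨hxo, hxW⟩
    exact ⟨y, hy1.1, hy2, hy1.2⟩
  obtain ⟨u, hu, hut⟩ := hF _ hxcl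
  obtain ⟨φ, hφ, C, hC, hCU⟩ := hSC u hut
  obtain ⟨k, hk⟩ := (hCU W (hWo.mem_nhds hxW)).exists
  obtain ⟨hCk, huk, hxk⟩ := hC k
  have : u (φ k) ∈ V := ⟨C k, ⟨hk, hCk, hxk⟩, huk⟩
  exact (hu (φ k)).1 this
end

section
/- Let x be a point of a topological space X that has a neighbourhood base B such that the intersection of every nonempty subfamily of B is connected (a strong local connectivity point). Then x is a sequentially connectible (SC) point of X. -/
open Filter Topology

theorem stmt11 {X : Type*} [TopologicalSpace X] (x : X)
    (B : Set (Set X))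
    (hBnhds : ∀ V ∈ B, V ∈ 𝓝 x)
    (hBbasis : ∀ U ∈ 𝓝 x, ∃ V ∈ B, V ⊆ U)
    (hBconn : ∀ S ⊆ B, S.Nonempty → IsPreconnected (⋂₀ S)) :
    SCPoint x := by
  intro u hu
  obtain ⟨V₀, hV₀B, -⟩ := hBbasis Set.univ Filter.univ_mem
  obtain ⟨N, hN⟩ := (Filter.eventually_atTop).1 (hu.eventually (hBnhds V₀ hV₀B))
  refine ⟨fun k => N + k, fun a b h => by simpa using h, fun k => ⋂₀ {V ∈ B | u (N + k) ∈ V}, ?_, ?_⟩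
  · intro k
    refine ⟨hBconn _ (fun V hV => hV.1) ⟨V₀, hV₀B, hN (N + k) (by omega)⟩, ?_, ?_⟩
    · exact fun V hV => hV.2
    · exact fun V hV => mem_of_mem_nhds (hBnhds V hV.1)
  · intro U hU
    obtain ⟨V, hVB, hVU⟩ := hBbasis U hU
    obtain ⟨M, hM⟩ := (Filter.eventually_atTop).1 (hu.eventually (hBnhds V hVB))
    refine Filter.eventually_atTop.2 ⟨M, fun k hk => ?_⟩
    exact fun y hy => hVU (hy V ⟨hVB, hM (N + k) (by omega)⟩)
end

section
/- Let f : X → Y be a preserving function into a Hausdorff space Y. Then f is sequentially continuous at every SC point of X; that is, if x is an SC point and x_n → x, then f(x_n) → f(x). -/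
open Filter Topology

/-- If `c → x`, all values `f (c k)` lie in a closed set `F` with `f x ∉ F`, and `f`
preserves compactness, then some value `z ∈ F` is attained infinitely often. -/
lemma lemB {X Y : Type*} [TopologicalSpace X] [TopologicalSpace Y] [T2Space Y]
    {f : X → Y} (hf1 : ∀ K : Set X, IsCompact K → IsCompact (f '' K))
    {x : X} {c : ℕ → X} (hc : Tendsto c atTop (𝓝 x))
    {F : Set Y} (hF : IsClosed F) (hxF : f x ∉ F) (hcF : ∀ k, f (c k) ∈ F) :
    ∃ z ∈ F, {k | f (c k) = z}.Infinite := by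
  set l : Filter Y := map (fun k => f (c k)) atTop with hl
  have hK : IsCompact (insert x (Set.range c)) := hc.isCompact_insert_range
  have hfK : IsCompact (f '' insert x (Set.range c)) := hf1 _ hK
  have hle : l ≤ 𝓟 (f '' insert x (Set.range c)) := by
    rw [hl, le_principal_iff, Filter.mem_map]
    exact Filter.Eventually.of_forall fun k => ⟨c k, Set.mem_insert_of_mem _ ⟨k, rfl⟩, rfl⟩
  obtain ⟨z, -, hcl⟩ := hfK.exists_clusterPt hle
  have hzF : z ∈ F := by
    have h1 : l ≤ 𝓟 F := by
      rw [hl, le_principal_iff, Filter.mem_map]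
      exact Filter.Eventually.of_forall hcF
    have := hcl.mono h1
    rw [← hF.closure_eq]
    exact mem_closure_iff_clusterPt.2 this
  refine ⟨z, hzF, ?_⟩
  have key : ∀ N : ℕ, ∃ k : ℕ, f (c (k + N)) = z := by
    intro N
    have hcN : Tendsto (fun j => c (j + N)) atTop (𝓝 x) := hc.comp (tendsto_add_atTop_nat N)
    have hKN : IsCompact (f '' insert x (Set.range fun j => c (j + N))) :=
      hf1 _ hcN.isCompact_insert_range
    have hclosed : IsClosed (f '' insert x (Set.range fun j => c (j + N))) := hKN.isClosed
    have hmap : map (fun j => f (c (j + N))) atTop = l := by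
      have : (fun j => f (c (j + N))) = (fun k => f (c k)) ∘ (fun j => j + N) := rfl
      rw [hl, this, ← Filter.map_map, Filter.map_add_atTop_eq_nat]
    have hleN : l ≤ 𝓟 (f '' insert x (Set.range fun j => c (j + N))) := by
      rw [← hmap, le_principal_iff, Filter.mem_map]
      exact Filter.Eventually.of_forall fun j =>
        ⟨c (j + N), Set.mem_insert_of_mem _ ⟨j, rfl⟩, rfl⟩
    have hzmem : z ∈ f '' insert x (Set.range fun j => c (j + N)) := by
      rw [← hclosed.closure_eq]
      exact mem_closure_iff_clusterPt.2 (hcl.mono hleN)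
    rw [Set.image_insert_eq] at hzmem
    rcases hzmem with h | h
    · exact absurd (h ▸ hzF) hxF
    · obtain ⟨w, ⟨j, rfl⟩, hw⟩ := h
      exact ⟨j, hw⟩
  by_contra hfin
  rw [Set.not_infinite] at hfin
  obtain ⟨B, hB⟩ := hfin.bddAbove
  obtain ⟨k, hk⟩ := key (B + 1)
  have : k + (B + 1) ≤ B := hB hk
  omega

/-- A preconnected set meeting an open set `G` and the complement of its closure must meet
the "frontier" `closure G \ G`. -/
lemma cross {Y : Type*} [TopologicalSpace Y] {S G : Set Y} (hS : IsPreconnected S)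
    {p q : Y} (hp : p ∈ S) (hpG : p ∈ G) (hG : IsOpen G) (hq : q ∈ S) (hqG : q ∉ closure G) :
    ∃ r ∈ S, r ∈ closure G ∧ r ∉ G := by
  by_contra h
  push_neg at h
  have hcover : S ⊆ G ∪ (closure G)ᶜ := by
    intro y hy
    by_cases hyc : y ∈ closure G
    · exact Or.inl (h y hy hyc)
    · exact Or.inr hyc
  obtain ⟨r, -, hr1, hr2⟩ := hS G (closure G)ᶜ hG isClosed_closure.isOpen_compl hcover
    ⟨p, hp, hpG⟩ ⟨q, hq, hqG⟩
  exact hr2 (subset_closure hr1)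

/-- Key step: from a value `z ≠ f x` attained in infinitely many of the connected sets `C k`
and an open `G ∋ z` whose closure misses `f x`, produce a new value on the frontier of `G`,
again attained in infinitely many `C k`. -/
lemma claimA {X Y : Type*} [TopologicalSpace X] [TopologicalSpace Y] [T2Space Y]
    {f : X → Y} (hf : Preserving f) {x : X} {C : ℕ → Set X}
    (hC : ∀ k, IsPreconnected (C k) ∧ x ∈ C k)
    (hC2 : ∀ U ∈ 𝓝 x, ∀ᶠ k in atTop, C k ⊆ U)
    {z : Y} (hzT : {k | z ∈ f '' C k}.Infinite)
    {G : Set Y} (hG : IsOpen G) (hzG : z ∈ G) (hxG : f x ∉ closure G) :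
    ∃ z', (z' ∈ closure G ∧ z' ∉ G) ∧ z' ≠ f x ∧ {k | z' ∈ f '' C k}.Infinite := by
  -- a strictly monotone enumeration into the infinite index set
  have step : ∀ b : ℕ, ∃ k, k ∈ {k | z ∈ f '' C k} ∧ b < k := by
    intro b
    obtain ⟨k, hk, hbk⟩ := hzT.exists_gt b
    exact ⟨k, hk, hbk⟩
  choose g hg1 hg2 using step
  set κ : ℕ → ℕ := fun n => Nat.rec (g 0) (fun _ ih => g ih) n with hκdef
  have hκmono : StrictMono κ := strictMono_nat_of_lt_succ fun n => hg2 _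
  have hκmem : ∀ n, z ∈ f '' C (κ n) := by
    intro n
    cases n with
    | zero => exact hg1 0
    | succ m => exact hg1 (κ m)
  -- pick frontier crossing points in each C (κ j)
  have hcrossing : ∀ j : ℕ, ∃ c ∈ C (κ j), f c ∈ closure G ∧ f c ∉ G := by
    intro j
    have hS : IsPreconnected (f '' C (κ j)) := hf.2 _ (hC (κ j)).1
    obtain ⟨r, hrS, hr1, hr2⟩ := cross hS (hκmem j) hzG hG
      ⟨x, (hC (κ j)).2, rfl⟩ hxG
    obtain ⟨c, hc, rfl⟩ := hrS
    exact ⟨c, hc, hr1, hr2⟩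
  choose c hcmem hc1 hc2 using hcrossing
  have hctend : Tendsto c atTop (𝓝 x) := by
    rw [tendsto_atTop'] at *
    intro U hU
    obtain ⟨N, hN⟩ := (hC2 U hU).exists_forall_of_atTop
    refine ⟨N, fun j hj => hN (κ j) (le_trans hj (hκmono.le_apply)) (hcmem j)⟩
  have hFc : IsClosed (closure G \ G) := isClosed_closure.sdiff hG
  have hxF : f x ∉ closure G \ G := fun h => hxG h.1
  obtain ⟨z', hz'F, hz'inf⟩ := lemB hf.1 hctend hFc hxF (fun j => ⟨hc1 j, hc2 j⟩)
  refine ⟨z', ⟨hz'F.1, hz'F.2⟩, fun h => hxG (h ▸ hz'F.1), ?_⟩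
  have : κ '' {j | f (c j) = z'} ⊆ {k | z' ∈ f '' C k} := by
    rintro k ⟨j, hj, rfl⟩
    exact ⟨c j, hcmem j, hj⟩
  exact ((hz'inf.image (hκmono.injective.injOn)).mono this)

theorem stmt12 {X Y : Type*} [TopologicalSpace X] [TopologicalSpace Y] [T2Space Y]
    (f : X → Y) (hf : Preserving f) (x : X) (hx : SCPoint x)
    (u : ℕ → X) (hu : Tendsto u atTop (𝓝 x)) :
    Tendsto (fun n => f (u n)) atTop (𝓝 (f x)) := by
  by_contra hcon
  -- get an open V ∋ f x avoided frequently
  rw [tendsto_def] at hcon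
  push_neg at hcon
  obtain ⟨s, hs, hns⟩ := hcon
  set V : Set Y := interior s with hVdef
  have hVo : IsOpen V := isOpen_interior
  have hfxV : f x ∈ V := mem_interior_iff_mem_nhds.2 hs
  have hfreq : ∃ᶠ n in atTop, f (u n) ∉ V := by
    have h1 : ¬ ∀ᶠ n in atTop, f (u n) ∈ V :=
      fun h => hns (h.mono fun n hn => interior_subset hn)
    exact Filter.not_eventually.mp h1
  obtain ⟨ψ, hψmono, hψ⟩ := Filter.extraction_of_frequently_atTop hfreq
  have huψ : Tendsto (fun n => u (ψ n)) atTop (𝓝 x) := hu.comp hψmono.tendsto_atTop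
  -- Lemma B: some value z₁ ∉ V is attained infinitely often
  obtain ⟨z₁, hz₁V, hz₁inf⟩ := lemB hf.1 huψ (isClosed_compl_iff.2 hVo)
    (by simp [hfxV]) (fun k => hψ k)
  have hz₁ne : z₁ ≠ f x := fun h => hz₁V (h ▸ hfxV)
  -- extract constant-value subsequence
  have step1 : ∀ b : ℕ, ∃ k, f (u (ψ k)) = z₁ ∧ b < k := by
    intro b
    obtain ⟨k, hk, hbk⟩ := hz₁inf.exists_gt b
    exact ⟨k, hk, hbk⟩
  choose g hg1 hg2 using step1
  set ρ : ℕ → ℕ := fun n => Nat.rec (g 0) (fun _ ih => g ih) n with hρdef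
  have hρmono : StrictMono ρ := strictMono_nat_of_lt_succ fun n => hg2 _
  have hρval : ∀ n, f (u (ψ (ρ n))) = z₁ := by
    intro n
    cases n with
    | zero => exact hg1 0
    | succ m => exact hg1 (ρ m)
  set a : ℕ → X := fun n => u (ψ (ρ n)) with hadef
  have ha : Tendsto a atTop (𝓝 x) := huψ.comp hρmono.tendsto_atTop
  -- SC point: connected sets
  obtain ⟨φ, hφmono, C, hC, hC2⟩ := hx a ha
  have hCpre : ∀ k, IsPreconnected (C k) ∧ x ∈ C k := fun k => ⟨(hC k).1, (hC k).2.2⟩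
  have hz₁mem : ∀ k, z₁ ∈ f '' C k := fun k => ⟨a (φ k), (hC k).2.1, hρval (φ k)⟩
  have hz₁T : {k | z₁ ∈ f '' C k}.Infinite := by
    have : {k | z₁ ∈ f '' C k} = Set.univ := Set.eq_univ_of_forall hz₁mem
    rw [this]; exact Set.infinite_univ
  -- Hausdorff separation of z₁ and f x
  obtain ⟨W₁, V₁, hW₁o, hV₁o, hz₁W, hfxV₁, hdisj⟩ := t2_separation hz₁ne
  have hfxW₁ : f x ∉ closure W₁ := by
    have := hdisj.closure_left hV₁o
    exact fun h => Set.disjoint_left.mp this h hfxV₁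
  -- the set of "bad values" in closure W₁; it is infinite
  set Z : Set Y := {z' | z' ∈ closure W₁ ∧ z' ≠ f x ∧ {k | z' ∈ f '' C k}.Infinite} with hZdef
  have hZinf : Z.Infinite := by
    by_contra hfin
    rw [Set.not_infinite] at hfin
    -- separate z₁ from each other point of Z
    have hsep : ∀ y : Y, ∃ A : Set Y, IsOpen A ∧ z₁ ∈ A ∧ (y ≠ z₁ → y ∉ closure A) := by
      intro y
      by_cases hy : y = z₁
      · exact ⟨Set.univ, isOpen_univ, Set.mem_univ _, fun h => absurd hy h⟩
      · obtain ⟨A, B, hAo, hBo, hz₁A, hyB, hAB⟩ := t2_separation (Ne.symm hy)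
        refine ⟨A, hAo, hz₁A, fun _ h => ?_⟩
        exact Set.disjoint_left.mp (hAB.closure_left hBo) h hyB
    classical
    choose A hAo hz₁A hyA using hsep
    set G : Set Y := W₁ ∩ ⋂ y ∈ Z, A y with hGdef
    have hGo : IsOpen G := hW₁o.inter (hfin.isOpen_biInter fun y _ => hAo y)
    have hz₁G : z₁ ∈ G := ⟨hz₁W, Set.mem_iInter₂.2 fun y _ => hz₁A y⟩
    have hGW : closure G ⊆ closure W₁ := closure_mono Set.inter_subset_left
    have hfxG : f x ∉ closure G := fun h => hfxW₁ (hGW h)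
    obtain ⟨z', ⟨hz'c, hz'G⟩, hz'ne, hz'inf⟩ := claimA hf hCpre hC2 hz₁T hGo hz₁G hfxG
    have hz'Z : z' ∈ Z := ⟨hGW hz'c, hz'ne, hz'inf⟩
    by_cases hz'z₁ : z' = z₁
    · exact hz'G (hz'z₁ ▸ hz₁G)
    · have hsub : G ⊆ A z' := fun y hy => Set.mem_iInter₂.1 hy.2 z' hz'Z
      exact hyA z' hz'z₁ ((closure_mono hsub) hz'c)
  -- infinitely many distinct bad values: enumerate and diagonalize
  set e : ℕ ↪ Z := hZinf.natEmbedding _ with hedef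
  have hT : ∀ m : ℕ, {k | (e m : Y) ∈ f '' C k}.Infinite := fun m => (e m).2.2.2
  have step2 : ∀ (m b : ℕ), ∃ k, (e m : Y) ∈ f '' C k ∧ b < k := by
    intro m b
    obtain ⟨k, hk, hbk⟩ := (hT m).exists_gt b
    exact ⟨k, hk, hbk⟩
  choose g2 hg21 hg22 using step2
  set κ : ℕ → ℕ := fun n => Nat.rec (g2 0 0) (fun n ih => g2 (n + 1) ih) n with hκdef
  have hκmono : StrictMono κ := strictMono_nat_of_lt_succ fun n => hg22 _ _
  have hκmem : ∀ m, (e m : Y) ∈ f '' C (κ m) := by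
    intro m
    cases m with
    | zero => exact hg21 0 0
    | succ n => exact hg21 (n + 1) (κ n)
  choose b hbmem hbval using hκmem
  have hbtend : Tendsto b atTop (𝓝 x) := by
    rw [tendsto_atTop'] at *
    intro U hU
    obtain ⟨N, hN⟩ := (hC2 U hU).exists_forall_of_atTop
    exact ⟨N, fun m hm => hN (κ m) (le_trans hm hκmono.le_apply) (hbmem m)⟩
  obtain ⟨zstar, hzs, hzsinf⟩ := lemB hf.1 hbtend isClosed_closure hfxW₁
    (fun m => (hbval m) ▸ (e m).2.1)
  obtain ⟨m, hm, m', hm', hmm'⟩ := hzsinf.nontrivial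
  have : e m = e m' := by
    apply Subtype.ext
    rw [← hbval m, ← hbval m', hm, hm']
  exact hmm' (e.injective this)
end

section
/- Every sequential SC space is locally connected. -/
open Filter Topology

theorem stmt13 {X : Type*} [TopologicalSpace X] [SequentialSpace X]
    (hSC : ∀ x : X, SCPoint x) : LocallyConnectedSpace X := by
  rw [locallyConnectedSpace_iff_connectedComponentIn_open]
  intro F hF x hx
  set C := connectedComponentIn F x with hC
  -- show complement is sequentially closed
  rw [← isClosed_compl_iff, ← isSeqClosed_iff_isClosed]
  intro u y hu huy
  by_contra hyC
  simp only [Set.mem_compl_iff, not_not] at hyC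
  have hyF : y ∈ F := connectedComponentIn_subset F x hyC
  -- u n ∉ C for all n, but eventually u n ∈ F
  have huF : ∀ᶠ n in atTop, u n ∈ F := huy (hF.mem_nhds hyF)
  obtain ⟨φ, hφ, D, hD, hconv⟩ := hSC y u huy
  have hFk : ∀ᶠ k in atTop, D k ⊆ F := hconv F (hF.mem_nhds hyF)
  obtain ⟨k, hkF⟩ := hFk.exists
  obtain ⟨hpre, humem, hymem⟩ := hD k
  have hsub : D k ⊆ connectedComponentIn F y :=
    hpre.subset_connectedComponentIn hymem hkF
  exact hu (φ k) (by rw [hC, connectedComponentIn_eq hyC]; exact hsub humem)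
end

section
/- If X is a sequential SC space and Y is Hausdorff, then every preserving function f : X → Y is continuous. -/
open Filter Topology

/-- A value `c` is attained, along a strictly monotone index sequence, at points lying in the
corresponding members of the family `C`. -/
def ValueIO {X Y : Type*} (f : X → Y) (C : ℕ → Set X) (c : Y) : Prop :=
  ∃ σ : ℕ → ℕ, StrictMono σ ∧ ∃ z : ℕ → X, (∀ i, z i ∈ C (σ i)) ∧ ∀ i, f (z i) = c

/-- Selections from a family of sets converging to `x` converge to `x`. -/
private lemma sel_tendsto {X : Type*} [TopologicalSpace X] {x : X} {C : ℕ → Set X}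
    (hCU : ∀ U ∈ 𝓝 x, ∀ᶠ k in atTop, C k ⊆ U) {j : ℕ → ℕ} (hj : ∀ m, m ≤ j m)
    {w : ℕ → X} (hw : ∀ m, w m ∈ C (j m)) : Tendsto w atTop (𝓝 x) := by
  rw [Filter.tendsto_def]
  intro s hs
  obtain ⟨M, hM⟩ := eventually_atTop.mp (hCU s hs)
  exact mem_atTop_sets.mpr ⟨M, fun m hm => hM (j m) (hm.trans (hj m)) (hw m)⟩

/-- Key compactness lemma: if `w → x` and all values `f (w m)` lie in a closed set `Γ` not
containing `f x`, then some value `c ∈ Γ` is attained infinitely often. -/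
private lemma cluster_io {X Y : Type*} [TopologicalSpace X] [TopologicalSpace Y] [T2Space Y]
    {f : X → Y} (hf : Preserving f) {x : X} {w : ℕ → X} (hw : Tendsto w atTop (𝓝 x))
    {Γ : Set Y} (hΓ : IsClosed Γ) (hvals : ∀ m, f (w m) ∈ Γ) (hfx : f x ∉ Γ) :
    ∃ c ∈ Γ, ∃ᶠ m in atTop, f (w m) = c := by
  set F : Filter Y := Filter.map (fun m => f (w m)) atTop with hF
  have hK : IsCompact (insert x (Set.range w)) := hw.isCompact_insert_range
  have hfK : IsCompact (f '' insert x (Set.range w)) := hf.1 _ hK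
  have hle : F ≤ 𝓟 (f '' insert x (Set.range w)) := by
    refine le_principal_iff.mpr (mem_map.mpr (Eventually.of_forall fun m => ?_))
    exact Set.mem_image_of_mem f (Set.mem_insert_of_mem _ (Set.mem_range_self m))
  obtain ⟨c, _, hc⟩ := hfK hle
  have hcΓ : c ∈ Γ := by
    have hleΓ : F ≤ 𝓟 Γ := le_principal_iff.mpr (mem_map.mpr (Eventually.of_forall hvals))
    have := mem_closure_iff_clusterPt.mpr (hc.mono hleΓ)
    rwa [hΓ.closure_eq] at this
  have hcne : c ≠ f x := fun h => hfx (h ▸ hcΓ)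
  refine ⟨c, hcΓ, frequently_atTop.mpr fun n => ?_⟩
  have hwn : Tendsto (fun i => w (i + n)) atTop (𝓝 x) := hw.comp (tendsto_add_atTop_nat n)
  have hKn : IsCompact (insert x (Set.range fun i => w (i + n))) := hwn.isCompact_insert_range
  have hclosed : IsClosed (f '' insert x (Set.range fun i => w (i + n))) :=
    (hf.1 _ hKn).isClosed
  have hSsub : (fun m => f (w m)) '' Set.Ici n ⊆ f '' insert x (Set.range fun i => w (i + n)) := by
    rintro y ⟨m, hm, rfl⟩
    refine ⟨w m, Set.mem_insert_of_mem _ ⟨m - n, ?_⟩, rfl⟩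
    show w (m - n + n) = w m
    rw [Nat.sub_add_cancel (Set.mem_Ici.mp hm)]
  have hmemF : (fun m => f (w m)) '' Set.Ici n ∈ F :=
    mem_map.mpr (mem_of_superset (Ici_mem_atTop n) fun m hm => Set.mem_image_of_mem _ hm)
  have hcc : c ∈ closure ((fun m => f (w m)) '' Set.Ici n) :=
    mem_closure_iff_clusterPt.mpr (hc.mono (le_principal_iff.mpr hmemF))
  have hcKn : c ∈ f '' insert x (Set.range fun i => w (i + n)) :=
    hclosed.closure_subset ((closure_mono hSsub) hcc)
  obtain ⟨t, ht, hfc⟩ := hcKn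
  rcases ht with rfl | ⟨i, rfl⟩
  · exact (hcne hfc.symm).elim
  · exact ⟨i + n, Nat.le_add_left n i, hfc⟩

/-- Expansion lemma: from a `ValueIO` value `b` inside an open `O` with `f x ∉ closure O`,
produce a new `ValueIO` value on the frontier of `O`. -/
private lemma expansion {X Y : Type*} [TopologicalSpace X] [TopologicalSpace Y] [T2Space Y]
    {f : X → Y} (hf : Preserving f) {x : X} {C : ℕ → Set X}
    (hCconn : ∀ k, IsPreconnected (C k)) (hxC : ∀ k, x ∈ C k)
    (hCU : ∀ U ∈ 𝓝 x, ∀ᶠ k in atTop, C k ⊆ U)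
    {b : Y} (hbv : ValueIO f C b) {O : Set Y} (hO : IsOpen O) (hbO : b ∈ O)
    (hfxO : f x ∉ closure O) :
    ∃ c, ValueIO f C c ∧ c ∈ closure O ∧ c ∉ O := by
  obtain ⟨j, hj, w, hwC, hwv⟩ := hbv
  have hsel : ∀ m, ∃ z, z ∈ C (j m) ∧ f z ∈ closure O \ O := by
    intro m
    by_contra hcon
    push_neg at hcon
    have hpc := hf.2 _ (hCconn (j m))
    have hcover : f '' C (j m) ⊆ O ∪ (closure O)ᶜ := by
      rintro y ⟨t, ht, rfl⟩
      by_cases h1 : f t ∈ O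
      · exact Or.inl h1
      · exact Or.inr fun h2 => hcon t ht ⟨h2, h1⟩
    have h1 : (f '' C (j m) ∩ O).Nonempty := ⟨b, ⟨w m, hwC m, hwv m⟩, hbO⟩
    have h2 : (f '' C (j m) ∩ (closure O)ᶜ).Nonempty := ⟨f x, ⟨x, hxC _, rfl⟩, hfxO⟩
    obtain ⟨y, _, hyO, hyc⟩ :=
      hpc O (closure O)ᶜ hO isClosed_closure.isOpen_compl hcover h1 h2
    exact hyc (subset_closure hyO)
  choose z hzC hzO using hsel
  have hz : Tendsto z atTop (𝓝 x) := sel_tendsto hCU (fun m => hj.le_apply) hzC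
  have hΓ : IsClosed (closure O \ O) := by
    rw [Set.diff_eq]
    exact isClosed_closure.inter (isClosed_compl_iff.mpr hO)
  obtain ⟨c, hcΓ, hcfreq⟩ := cluster_io hf hz hΓ hzO (fun h => hfxO h.1)
  obtain ⟨σ, hσ, hσv⟩ := extraction_of_frequently_atTop hcfreq
  exact ⟨c, ⟨fun i => j (σ i), hj.comp hσ, fun i => z (σ i),
    fun i => hzC (σ i), fun i => hσv i⟩, hcΓ.1, hcΓ.2⟩

theorem stmt14 {X Y : Type*} [TopologicalSpace X] [TopologicalSpace Y]
    [SequentialSpace X] [T2Space Y]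
    (hSC : ∀ x : X, SCPoint x)
    (f : X → Y) (hf : Preserving f) : Continuous f := by
  rw [continuous_iff_seqContinuous]
  intro u x hu
  classical
  by_contra hcont
  -- extract an open V around f x missed frequently
  have hV : ∃ V, IsOpen V ∧ f x ∈ V ∧ ∃ᶠ n in atTop, f (u n) ∉ V := by
    rw [Filter.tendsto_def] at hcont
    push_neg at hcont
    obtain ⟨s, hs, hsn⟩ := hcont
    obtain ⟨V, hVs, hVo, hVx⟩ := mem_nhds_iff.mp hs
    refine ⟨V, hVo, hVx, ?_⟩
    have hfreq : ∃ᶠ n in atTop, f (u n) ∉ s := by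
      apply Filter.not_eventually.mp
      intro hev
      exact hsn hev
    exact hfreq.mono fun n hn hVn => hn (hVs hVn)
  obtain ⟨V, hVo, hVx, hVf⟩ := hV
  obtain ⟨ψ, hψ, hψv⟩ := extraction_of_frequently_atTop hVf
  have hu' : Tendsto (fun k => u (ψ k)) atTop (𝓝 x) := hu.comp hψ.tendsto_atTop
  obtain ⟨q, hqC, hqf⟩ :=
    cluster_io hf hu' hVo.isClosed_compl (fun m => hψv m) (fun h => h hVx)
  obtain ⟨σ₂, hσ₂, hσ₂v⟩ := extraction_of_frequently_atTop hqf
  set u'' : ℕ → X := fun k => u (ψ (σ₂ k)) with hu''def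
  have hu'' : Tendsto u'' atTop (𝓝 x) := hu'.comp hσ₂.tendsto_atTop
  obtain ⟨φ, hφ, C, hC, hCU⟩ := hSC x u'' hu''
  have hCconn : ∀ k, IsPreconnected (C k) := fun k => (hC k).1
  have hxC : ∀ k, x ∈ C k := fun k => (hC k).2.2
  have hq_ne : q ≠ f x := fun h => hqC (h ▸ hVx)
  have hqIO : ValueIO f C q :=
    ⟨id, strictMono_id, fun k => u'' (φ k), fun k => (hC k).2.1, fun k => hσ₂v (φ k)⟩
  -- separate q from f x
  obtain ⟨Q, P, hQo, hPo, hqQ, hpP, hdisj⟩ := t2_separation hq_ne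
  have hpQ : f x ∉ closure Q := by
    intro h
    obtain ⟨y, hy1, hy2⟩ := mem_closure_iff.mp h P hPo hpP
    exact Set.disjoint_left.mp hdisj hy2 hy1
  -- Finset avoidance step
  have key : ∀ F : Finset Y, ∃ b, ValueIO f C b ∧ b ∈ closure Q ∧ b ∉ F := by
    intro F
    have hsep : ∀ y : Y, ∃ S : Set Y, IsOpen S ∧ q ∈ S ∧ (y ≠ q → y ∉ closure S) := by
      intro y
      by_cases h : y = q
      · exact ⟨Set.univ, isOpen_univ, Set.mem_univ q, fun hy => absurd h hy⟩
      · obtain ⟨S, T, hSo, hTo, hqS, hyT, hST⟩ := t2_separation (Ne.symm h)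
        refine ⟨S, hSo, hqS, fun _ hc => ?_⟩
        obtain ⟨zz, hz1, hz2⟩ := mem_closure_iff.mp hc T hTo hyT
        exact Set.disjoint_left.mp hST hz2 hz1
    choose S hSo hqS hSy using hsep
    set O : Set Y := Q ∩ ⋂ y ∈ F, S y with hOdef
    have hOo : IsOpen O := hQo.inter (isOpen_biInter_finset fun y _ => hSo y)
    have hqO : q ∈ O := ⟨hqQ, Set.mem_biInter fun y _ => hqS y⟩
    have hfxO : f x ∉ closure O := fun h => hpQ (closure_mono Set.inter_subset_left h)
    obtain ⟨b, hbIO, hbcl, hbO⟩ := expansion hf hCconn hxC hCU hqIO hOo hqO hfxO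
    refine ⟨b, hbIO, closure_mono Set.inter_subset_left hbcl, ?_⟩
    intro hbF
    have hbq : b ≠ q := fun h => hbO (h ▸ hqO)
    have hOS : O ⊆ S b := Set.inter_subset_right.trans (Set.biInter_subset_of_mem hbF)
    exact hSy b hbq (closure_mono hOS hbcl)
  choose g hgIO hgcl hgF using key
  -- build injective sequence of such values
  let Fs : ℕ → Finset Y := fun m => Nat.rec ∅ (fun _ Fprev => insert (g Fprev) Fprev) m
  let b : ℕ → Y := fun m => g (Fs m)
  have hFs_succ : ∀ m, Fs (m + 1) = insert (b m) (Fs m) := fun m => rfl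
  have hFs_mono : ∀ {m m' : ℕ}, m ≤ m' → Fs m ⊆ Fs m' := by
    intro m m' h
    induction h with
    | refl => exact subset_rfl
    | step _ ih =>
      refine ih.trans ?_
      rw [hFs_succ]
      exact Finset.subset_insert _ _
  have hb_lt : ∀ {a a' : ℕ}, a < a' → b a ≠ b a' := by
    intro a a' hlt heq
    have h1 : b a ∈ Fs (a + 1) := by rw [hFs_succ]; exact Finset.mem_insert_self _ _
    have h2 : b a ∈ Fs a' := hFs_mono hlt h1
    rw [heq] at h2
    exact hgF (Fs a') h2
  -- diagonal sequence
  have hex : ∀ m, ∃ jz : (ℕ → ℕ) × (ℕ → X), StrictMono jz.1 ∧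
      (∀ i, jz.2 i ∈ C (jz.1 i)) ∧ (∀ i, f (jz.2 i) = b m) := by
    intro m
    obtain ⟨σ, hσ, zz, hz1, hz2⟩ := hgIO (Fs m)
    exact ⟨(σ, zz), hσ, hz1, hz2⟩
  choose jz hjz1 hjz2 hjz3 using hex
  let idx : ℕ → ℕ := fun m => Nat.rec 0 (fun k ik => (jz k).1 ik + 1) m
  let N : ℕ → ℕ := fun m => (jz m).1 (idx m)
  have hidx_succ : ∀ m, idx (m + 1) = N m + 1 := fun m => rfl
  have hNstep : ∀ m, N m < N (m + 1) := by
    intro m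
    have h1 : idx (m + 1) ≤ (jz (m + 1)).1 (idx (m + 1)) := (hjz1 (m + 1)).le_apply
    calc N m < N m + 1 := Nat.lt_succ_self _
    _ = idx (m + 1) := (hidx_succ m).symm
    _ ≤ N (m + 1) := h1
  have hNm : ∀ m, m ≤ N m := fun m => (strictMono_nat_of_lt_succ hNstep).le_apply
  let v : ℕ → X := fun m => (jz m).2 (idx m)
  have hvC : ∀ m, v m ∈ C (N m) := fun m => hjz2 m (idx m)
  have hvVal : ∀ m, f (v m) = b m := fun m => hjz3 m (idx m)
  have hv : Tendsto v atTop (𝓝 x) := sel_tendsto hCU hNm hvC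
  have hvals : ∀ m, f (v m) ∈ closure Q := fun m => (hvVal m).symm ▸ hgcl (Fs m)
  obtain ⟨c, _, hcf⟩ := cluster_io hf hv isClosed_closure hvals hpQ
  obtain ⟨m₁, _, hm₁⟩ := frequently_atTop.mp hcf 0
  obtain ⟨m₂, hm₂ge, hm₂⟩ := frequently_atTop.mp hcf (m₁ + 1)
  have hbb : b m₁ = b m₂ := by rw [← hvVal, hm₁, ← hm₂, hvVal]
  exact hb_lt (by omega) hbb
end

section
/- If X is a generalized ordered space (e.g., a linearly ordered space with the order topology), then X is inflatable: for every point x and every sequence x_n → x with x_n ≠ x, there exist a subsequence (x_{n_k}) and open neighbourhoods U_k of x_{n_k} such that every neighbourhood of x contains all but finitely many of the U_k. -/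
open Filter Topology

lemma aux15 {X : Type*} [LinearOrder X] [TopologicalSpace X] [OrderTopology X]
    (x : X) (v : ℕ → X) (hv : Tendsto v atTop (𝓝 x)) (hlt : ∀ n, v n < x) :
    ∃ φ : ℕ → ℕ, StrictMono φ ∧ ∃ U : ℕ → Set X,
      (∀ k, U k ∈ 𝓝 (v (φ k))) ∧
      ∀ V ∈ 𝓝 x, ∀ᶠ k in atTop, U k ⊆ V := by
  have key : ∀ p : ℕ, ∃ m, p < m ∧ v p < v m := by
    intro p
    have h1 : ∀ᶠ m in atTop, v m ∈ Set.Ioi (v p) :=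
      hv.eventually_mem (Ioi_mem_nhds (hlt p))
    have h2 : ∀ᶠ m in atTop, p < m := eventually_gt_atTop p
    obtain ⟨m, hm1, hm2⟩ := (h2.and h1).exists
    exact ⟨m, hm1, hm2⟩
  choose g hg1 hg2 using key
  set φ : ℕ → ℕ := fun k => g^[k] 0 with hφdef
  have hφ : ∀ k, φ (k + 1) = g (φ k) := fun k => Function.iterate_succ_apply' g k 0
  have hmono : StrictMono φ := strictMono_nat_of_lt_succ (fun n => by rw [hφ]; exact hg1 _)
  refine ⟨φ, hmono, fun k => Nat.rec (Set.Iio x) (fun p _ => Set.Ioo (v (φ p)) x) k, ?_, ?_⟩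
  · intro k
    cases k with
    | zero => exact Iio_mem_nhds (hlt _)
    | succ p =>
        exact isOpen_Ioo.mem_nhds ⟨by rw [hφ]; exact hg2 _, hlt _⟩
  · intro V hV
    obtain ⟨l, hl, hlV⟩ := exists_Ioc_subset_of_mem_nhds hV ⟨v 0, hlt 0⟩
    have hvt : Tendsto (fun k => v (φ k)) atTop (𝓝 x) := hv.comp hmono.tendsto_atTop
    have hev : ∀ᶠ k in atTop, v (φ k) ∈ Set.Ioi l := hvt.eventually_mem (Ioi_mem_nhds hl)
    obtain ⟨N, hN⟩ := eventually_atTop.1 hev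
    refine eventually_atTop.2 ⟨N + 1, ?_⟩
    intro k hk
    cases k with
    | zero => omega
    | succ p =>
        intro y hy
        exact hlV ⟨(hN p (by omega)).trans hy.1, hy.2.le⟩

theorem stmt15 {X : Type*} [LinearOrder X] [TopologicalSpace X] [OrderTopology X]
    (x : X) (u : ℕ → X) (hu : Tendsto u atTop (𝓝 x)) (hne : ∀ n, u n ≠ x) :
    ∃ φ : ℕ → ℕ, StrictMono φ ∧ ∃ U : ℕ → Set X,
      (∀ k, U k ∈ 𝓝 (u (φ k))) ∧
      ∀ V ∈ 𝓝 x, ∀ᶠ k in atTop, U k ⊆ V := by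
  have hfreq : (∃ᶠ n in atTop, u n < x) ∨ (∃ᶠ n in atTop, x < u n) := by
    by_contra h
    push_neg at h
    obtain ⟨h1, h2⟩ := h
    have := ((h1.and h2).exists)
    obtain ⟨n, hn1, hn2⟩ := this
    exact hne n (le_antisymm hn2 hn1)
  rcases hfreq with hfreq | hfreq
  · obtain ⟨ψ, hψ, hψlt⟩ := Filter.extraction_of_frequently_atTop hfreq
    obtain ⟨φ, hφ, U, hU, hUV⟩ :=
      aux15 x (fun n => u (ψ n)) (hu.comp hψ.tendsto_atTop) hψlt
    exact ⟨ψ ∘ φ, hψ.comp hφ, U, hU, hUV⟩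
  · obtain ⟨ψ, hψ, hψlt⟩ := Filter.extraction_of_frequently_atTop hfreq
    obtain ⟨φ, hφ, U, hU, hUV⟩ :=
      aux15 (X := Xᵒᵈ) (OrderDual.toDual x) (fun n => OrderDual.toDual (u (ψ n)))
        (hu.comp hψ.tendsto_atTop) hψlt
    exact ⟨ψ ∘ φ, hψ.comp hφ, U, hU, hUV⟩
end

section
/- Any preserving function f : X → Y from a locally connected space X into a Hausdorff space Y is weakly sequentially continuous at every inflatable point x: if x_n → x and f is not locally constant at each x_n, then f(x_n) → f(x). -/
open Filter Topology

/-- `x` is an inflatable point. -/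
def InflatablePoint {X : Type*} [TopologicalSpace X] (x : X) : Prop :=
  ∀ u : ℕ → X, Tendsto u atTop (𝓝 x) → (∀ n, u n ≠ x) →
    ∃ φ : ℕ → ℕ, StrictMono φ ∧ ∃ U : ℕ → Set X,
      (∀ k, U k ∈ 𝓝 (u (φ k))) ∧
      ∀ V ∈ 𝓝 x, ∀ᶠ k in atTop, U k ⊆ V

/-- Deletion/cluster-point argument: if `q → x` and `f ∘ q` is injective, then
`f ∘ q → f x`, assuming `f` preserves compactness. -/
lemma aux_clusterA {X Y : Type*} [TopologicalSpace X] [TopologicalSpace Y] [T2Space Y]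
    {f : X → Y} (hcomp : ∀ K : Set X, IsCompact K → IsCompact (f '' K))
    {x : X} {q : ℕ → X} (hq : Tendsto q atTop (𝓝 x))
    (hinj : Function.Injective fun j => f (q j)) :
    Tendsto (fun j => f (q j)) atTop (𝓝 (f x)) := by
  rw [tendsto_nhds]
  intro O hO hfxO
  by_contra hev
  have hfreq : ∃ᶠ j in atTop, f (q j) ∉ O := by
    rw [← Filter.not_eventually]; exact hev
  obtain ⟨e, he, hne⟩ := Filter.extraction_of_frequently_atTop hfreq
  set r : ℕ → X := q ∘ e with hr
  have hrt : Tendsto r atTop (𝓝 x) := hq.comp he.tendsto_atTop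
  have hrinj : Function.Injective fun j => f (r j) := by
    intro i j hij
    exact he.injective (hinj hij)
  have hK : IsCompact (insert x (Set.range r)) := hrt.isCompact_insert_range
  have hFK : IsCompact (f '' insert x (Set.range r)) := hcomp _ hK
  have hle : Filter.map (fun j => f (r j)) atTop ≤ 𝓟 (f '' insert x (Set.range r)) := by
    rw [Filter.le_principal_iff, Filter.mem_map]
    filter_upwards with j
    exact Set.mem_image_of_mem f (Set.mem_insert_of_mem _ ⟨j, rfl⟩)
  obtain ⟨z, hzF, hz⟩ := hFK.exists_clusterPt hle
  have hzO : z ∉ O := by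
    have hle2 : Filter.map (fun j => f (r j)) atTop ≤ 𝓟 Oᶜ := by
      rw [Filter.le_principal_iff, Filter.mem_map]
      filter_upwards with j
      exact hne j
    have : z ∈ closure Oᶜ := mem_closure_iff_clusterPt.2 (hz.mono hle2)
    rwa [IsClosed.closure_eq (isClosed_compl_iff.2 hO)] at this
  obtain ⟨p, hp, hpz⟩ := hzF
  rcases hp with hp | ⟨m, rfl⟩
  · exact hzO (by rw [← hpz, hp]; exact hfxO)
  -- z = f (r m); now delete the first m+1 terms
  set r' : ℕ → X := fun j => r (j + (m + 1)) with hr'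
  have hr't : Tendsto r' atTop (𝓝 x) := hrt.comp (tendsto_add_atTop_nat (m + 1))
  have hK' : IsCompact (f '' insert x (Set.range r')) := hcomp _ hr't.isCompact_insert_range
  have hmap : Filter.map (fun j => f (r' j)) atTop = Filter.map (fun j => f (r j)) atTop := by
    have h1 : (fun j => f (r' j)) = (fun j => f (r j)) ∘ (fun j => j + (m + 1)) := rfl
    rw [h1, ← Filter.map_map, Filter.map_add_atTop_eq_nat]
  have hz' : ClusterPt z (Filter.map (fun j => f (r' j)) atTop) := by rw [hmap]; exact hz
  have hle' : Filter.map (fun j => f (r' j)) atTop ≤ 𝓟 (f '' insert x (Set.range r')) := by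
    rw [Filter.le_principal_iff, Filter.mem_map]
    filter_upwards with j
    exact Set.mem_image_of_mem f (Set.mem_insert_of_mem _ ⟨j, rfl⟩)
  have hzin : z ∈ f '' insert x (Set.range r') := by
    have : z ∈ closure (f '' insert x (Set.range r')) :=
      mem_closure_iff_clusterPt.2 (hz'.mono hle')
    rwa [hK'.isClosed.closure_eq] at this
  obtain ⟨p', hp', hpz'⟩ := hzin
  rcases hp' with hp' | ⟨j, rfl⟩
  · exact hzO (by rw [← hpz', hp']; exact hfxO)
  · have : f (r (j + (m + 1))) = f (r m) := by rw [hpz', ← hpz]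
    have := hrinj this
    omega

/-- Greedy selection of a subsequence with pairwise-distinct values. -/
lemma aux_select {X Y : Type*} (f : X → Y) (C : ℕ → Set X) (P : Y → Prop)
    (H : ∀ (T : Finset Y) (K : ℕ), ∃ k, K ≤ k ∧ ∃ a ∈ C k, P (f a) ∧ f a ∉ T) :
    ∃ (κ : ℕ → ℕ) (q : ℕ → X), StrictMono κ ∧ (∀ j, q j ∈ C (κ j)) ∧
      (∀ j, P (f (q j))) ∧ Function.Injective fun j => f (q j) := by
  classical
  choose k hkk a ha hP hT using H
  let s : ℕ → Finset Y × ℕ := fun j => Nat.rec ((∅ : Finset Y), 0)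
    (fun _ p => (insert (f (a p.1 p.2)) p.1, k p.1 p.2 + 1)) j
  set κ : ℕ → ℕ := fun j => k (s j).1 (s j).2 with hκdef
  set q : ℕ → X := fun j => a (s j).1 (s j).2 with hqdef
  have hs : ∀ j, s (j + 1) = (insert (f (q j)) (s j).1, κ j + 1) := fun j => rfl
  have hκmono : StrictMono κ := by
    apply strictMono_nat_of_lt_succ
    intro j
    have h1 : (s (j + 1)).2 ≤ κ (j + 1) := hkk _ _
    rw [hs j] at h1
    omega
  have hTmono : ∀ i j, i ≤ j → (s i).1 ⊆ (s j).1 := by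
    intro i j hij
    induction j with
    | zero => simp_all
    | succ n ih =>
      rcases Nat.lt_or_ge i (n + 1) with h | h
      · have := ih (by omega)
        rw [hs n]
        exact this.trans (Finset.subset_insert _ _)
      · have : i = n + 1 := by omega
        subst this; rfl
  have hkey : ∀ i j, i < j → f (q i) ≠ f (q j) := by
    intro i j hij hEq
    have h1 : f (q i) ∈ (s (i + 1)).1 := by rw [hs i]; exact Finset.mem_insert_self _ _
    have h2 : f (q i) ∈ (s j).1 := hTmono (i + 1) j (by omega) h1
    rw [hEq] at h2
    exact hT _ _ h2
  refine ⟨κ, q, hκmono, fun j => ha _ _, fun j => hP _ _, ?_⟩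
  intro i j hij
  by_contra hne
  rcases Ne.lt_or_gt hne with h | h
  · exact hkey i j h hij
  · exact hkey j i h hij.symm

theorem stmt16 {X Y : Type*} [TopologicalSpace X] [TopologicalSpace Y]
    [LocallyConnectedSpace X] [T2Space Y]
    (f : X → Y) (hf : Preserving f) (x : X) (hx : InflatablePoint x)
    (u : ℕ → X) (hu : Tendsto u atTop (𝓝 x))
    (hnc : ∀ n, ¬ LocallyConstantAt f (u n)) :
    Tendsto (fun n => f (u n)) atTop (𝓝 (f x)) := by
  classical
  rw [tendsto_nhds]
  by_contra hcon
  push_neg at hcon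
  obtain ⟨W, hWo, hfxW, hWev⟩ := hcon
  have hfreq : ∃ᶠ n in atTop, f (u n) ∉ W := by
    rw [← Filter.not_eventually]; exact hWev
  obtain ⟨ψ, hψ, hψW⟩ := Filter.extraction_of_frequently_atTop hfreq
  set v : ℕ → X := u ∘ ψ with hv
  have hvt : Tendsto v atTop (𝓝 x) := hu.comp hψ.tendsto_atTop
  have hvx : ∀ n, v n ≠ x := by
    intro n h
    exact hψW n (by rw [show u (ψ n) = v n from rfl, h]; exact hfxW)
  obtain ⟨φ, hφ, U, hU, hUshrink⟩ := hx v hvt hvx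
  set w : ℕ → X := v ∘ φ with hw
  have hwW : ∀ k, f (w k) ∉ W := fun k => hψW (φ k)
  have hwnc : ∀ k, ¬ LocallyConstantAt f (w k) := fun k => hnc (ψ (φ k))
  -- connected open neighbourhoods inside U k
  have hCex : ∀ k, ∃ C : Set X, C ∈ 𝓝 (w k) ∧ IsPreconnected C ∧ C ⊆ U k := by
    intro k
    have hUk : U k ∈ 𝓝 (w k) := hU k
    have hwint : w k ∈ interior (U k) := mem_interior_iff_mem_nhds.2 hUk
    refine ⟨connectedComponentIn (interior (U k)) (w k), ?_, isPreconnected_connectedComponentIn, ?_⟩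
    · exact (IsOpen.connectedComponentIn isOpen_interior).mem_nhds (mem_connectedComponentIn hwint)
    · exact (connectedComponentIn_subset _ _).trans interior_subset
  choose C hCnb hCconn hCU using hCex
  have hCw : ∀ k, w k ∈ C k := fun k => mem_of_mem_nhds (hCnb k)
  have hshrink : ∀ V ∈ 𝓝 x, ∀ᶠ k in atTop, C k ⊆ V := by
    intro V hV
    exact (hUshrink V hV).mono fun k hk => (hCU k).trans hk
  have hnc' : ∀ k, ∃ a ∈ C k, f a ≠ f (w k) := by
    intro k
    by_contra h
    push_neg at h
    exact hwnc k ⟨C k, hCnb k, h⟩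
  -- trap dichotomy
  have hD : ∀ O : Set Y, IsOpen O → f x ∈ O →
      ∃ T : Finset Y, ∃ K : ℕ, ∀ k, K ≤ k → ∀ a ∈ C k, f a ∉ O → f a ∈ T := by
    intro O hOo hfxO
    by_contra hsel
    push_neg at hsel
    obtain ⟨κ, q, hκ, hqC, hqP, hqinj⟩ := aux_select f C (fun y => y ∉ O) hsel
    have hqt : Tendsto q atTop (𝓝 x) := by
      rw [tendsto_nhds]
      intro V hVo hxV
      show ∀ᶠ j in atTop, q j ∈ V
      have := hshrink V (hVo.mem_nhds hxV)
      rw [Filter.eventually_atTop] at this ⊢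
      obtain ⟨N, hN⟩ := this
      exact ⟨N, fun j hj => hN (κ j) (hj.trans hκ.le_apply) (hqC j)⟩
    have htend := aux_clusterA hf.1 hqt hqinj
    have hev2 : ∀ᶠ j in atTop, f (q j) ∈ O :=
      htend.eventually (show ∀ᶠ y in 𝓝 (f x), y ∈ O from hOo.mem_nhds hfxO)
    obtain ⟨j, hj⟩ := hev2.exists
    exact hqP j hj
  -- isolated-point / connectedness argument
  have hE : ∀ O : Set Y, IsOpen O → f x ∈ O → O ⊆ W →
      ∀ᶠ k in atTop, f (w k) ∈ closure O := by
    intro O hOo hfxO hOW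
    obtain ⟨T, K, hT⟩ := hD O hOo hfxO
    rw [Filter.eventually_atTop]
    refine ⟨K, fun k hk => ?_⟩
    by_contra ht
    have htT : f (w k) ∈ T := hT k hk _ (hCw k) fun h => hwW k (hOW h)
    set t := f (w k) with htdef
    have hfin : ((T : Set Y) \ {t}).Finite := (T.finite_toSet).diff
    have hAopen : IsOpen ((closure O)ᶜ ∩ ((T : Set Y) \ {t})ᶜ) :=
      isClosed_closure.isOpen_compl.inter hfin.isClosed.isOpen_compl
    have hBopen : IsOpen ({t}ᶜ : Set Y) := isOpen_compl_singleton
    have hpre : IsPreconnected (f '' C k) := hf.2 _ (hCconn k)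
    have hcover : f '' C k ⊆ ((closure O)ᶜ ∩ ((T : Set Y) \ {t})ᶜ) ∪ {t}ᶜ := by
      intro y hy
      by_cases hyt : y = t
      · left
        subst hyt
        exact ⟨ht, fun hc => hc.2 rfl⟩
      · right; exact hyt
    have hA : (f '' C k ∩ ((closure O)ᶜ ∩ ((T : Set Y) \ {t})ᶜ)).Nonempty := by
      refine ⟨t, Set.mem_image_of_mem f (hCw k), ht, fun hc => hc.2 rfl⟩
    have hB : (f '' C k ∩ {t}ᶜ).Nonempty := by
      obtain ⟨a, haC, hane⟩ := hnc' k
      exact ⟨f a, Set.mem_image_of_mem f haC, hane⟩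
    obtain ⟨z, hzS, hzA, hzB⟩ := hpre _ _ hAopen hBopen hcover hA hB
    obtain ⟨b, hbC, rfl⟩ := hzS
    have hbO : f b ∉ O := fun h => hzA.1 (subset_closure h)
    have hbT : f b ∈ T := hT k hk _ hbC hbO
    have : f b = t := by
      by_contra hne
      exact hzA.2 ⟨hbT, hne⟩
    exact hzB this
  -- top-level trap at W
  obtain ⟨T, K, hT⟩ := hD W hWo hfxW
  have hwT : ∀ k, K ≤ k → f (w k) ∈ T := fun k hk => hT k hk _ (hCw k) (hwW k)
  set T₁ : Finset Y := T.filter (fun y => {k | f (w k) = y}.Infinite) with hT₁def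
  have hTev : ∀ᶠ k in atTop, f (w k) ∈ T₁ := by
    have hBad : {k | K ≤ k ∧ f (w k) ∉ T₁}.Finite := by
      have hsub : {k | K ≤ k ∧ f (w k) ∉ T₁} ⊆
          ⋃ y ∈ (T.filter (fun y => ¬ {k | f (w k) = y}.Infinite) : Finset Y),
            {k | f (w k) = y} := by
        intro k hk
        have h1 : f (w k) ∈ T := hwT k hk.1
        have h2 : ¬ {j | f (w j) = f (w k)}.Infinite := by
          intro hinf
          exact hk.2 (Finset.mem_filter.2 ⟨h1, hinf⟩)
        exact Set.mem_biUnion (Finset.mem_filter.2 ⟨h1, h2⟩) rfl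
      refine Set.Finite.subset (Set.Finite.biUnion (Finset.finite_toSet _) ?_) hsub
      intro y hy
      rw [Finset.mem_coe, Finset.mem_filter] at hy
      exact Set.not_infinite.1 hy.2
    obtain ⟨N, hN⟩ := hBad.bddAbove
    rw [Filter.eventually_atTop]
    refine ⟨max K (N + 1), fun k hk => ?_⟩
    by_contra hc
    have : k ∈ {k | K ≤ k ∧ f (w k) ∉ T₁} := ⟨le_trans (le_max_left _ _) hk, hc⟩
    have := hN this
    omega
  -- separate each persistent value from f x
  have hsep : ∀ y : Y, ∃ V : Set Y, IsOpen V ∧ f x ∈ V ∧ (y ∈ T₁ → y ∉ closure V) := by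
    intro y
    by_cases hy : y ∈ T₁
    · have hyW : y ∉ W := by
        have hinf : {k | f (w k) = y}.Infinite := (Finset.mem_filter.1 hy).2
        obtain ⟨k, hk⟩ := hinf.nonempty
        rw [← hk]
        exact hwW k
      have hyx : y ≠ f x := fun h => hyW (h ▸ hfxW)
      obtain ⟨Vx, Vy, hVxo, hVyo, hfxVx, hyVy, hdisj⟩ := t2_separation hyx.symm
      refine ⟨Vx, hVxo, hfxVx, fun _ hc => ?_⟩
      rw [mem_closure_iff] at hc
      obtain ⟨p, hp⟩ := hc Vy hVyo hyVy
      exact Set.disjoint_left.1 hdisj hp.2 hp.1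
    · exact ⟨Set.univ, isOpen_univ, Set.mem_univ _, fun h => absurd h hy⟩
  choose V hVo hVx hVc using hsep
  set O : Set Y := W ∩ ⋂ y ∈ T₁, V y with hOdef
  have hOo : IsOpen O := hWo.inter (isOpen_biInter_finset fun y _ => hVo y)
  have hfxO : f x ∈ O := ⟨hfxW, Set.mem_iInter₂.2 fun y _ => hVx y⟩
  have hOW : O ⊆ W := Set.inter_subset_left
  obtain ⟨k, hk1, hk2⟩ := ((hE O hOo hfxO hOW).and hTev).exists
  have hOV : O ⊆ V (f (w k)) := fun z hz => Set.mem_iInter₂.1 hz.2 _ hk2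
  exact hVc (f (w k)) hk2 (closure_mono hOV hk1)
end

section
/- For a T₁ space X, the following are equivalent: (a) every connectedness preserving function from X into any T₁ space is continuous; (d) for every non-closed set A ⊆ X there exists a connected set H ⊆ X with H ∩ A ≠ ∅, H \ A ≠ ∅, and H \ A finite. -/
open Filter Topology

/-- In a T₁ space, a finite preconnected set is a subsingleton. -/
private lemma finite_preconn_subsingleton {X : Type*} [TopologicalSpace X] [T1Space X]
    {H : Set X} (hfin : H.Finite) (hH : IsPreconnected H) : H.Subsingleton := by
  intro x hx y hy
  by_contra hxy
  obtain ⟨z, hzH, hz1, hz2⟩ :=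
    hH {y}ᶜ (H \ {y})ᶜ isOpen_compl_singleton ((hfin.diff (t := {y})).isClosed.isOpen_compl)
      (fun z hz => by
        by_cases h : z = y
        · exact Or.inr (fun hc => hc.2 h)
        · exact Or.inl h)
      ⟨x, hx, hxy⟩ ⟨y, hy, fun h => h.2 rfl⟩
  exact hz2 ⟨hzH, hz1⟩

/-- Contradiction from a finite preconnected set split into two disjoint nonempty parts. -/
private lemma fin_contra {X : Type*} [TopologicalSpace X] [T1Space X] {C u v : Set X}
    (hC : IsPreconnected C) (hCfin : C.Finite) (hau : (C ∩ u).Nonempty)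
    (hbv : (C ∩ v).Nonempty) (hne : C ∩ (u ∩ v) = ∅) : False := by
  obtain ⟨a, haC, hau⟩ := hau
  obtain ⟨b, hbC, hbv⟩ := hbv
  have hab := finite_preconn_subsingleton hCfin hC haC hbC
  have : a ∈ C ∩ (u ∩ v) := ⟨haC, hau, by rw [hab]; exact hbv⟩
  rw [hne] at this
  exact this

private lemma key_contra {X : Type*} [TopologicalSpace X] [T1Space X] {A C u v : Set X}
    (hcon : ∀ H : Set X, IsPreconnected H → (H ∩ A).Nonempty → (H \ A).Nonempty →
      ¬(H \ A).Finite)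
    (hC : IsPreconnected C) (hu : uᶜ.Finite) (hv1 : v ∩ A = ∅) (hv2 : (Aᶜ \ v).Finite)
    (hcov : C ⊆ u ∪ v) (hau : (C ∩ u).Nonempty) (hbv : (C ∩ v).Nonempty)
    (hne : C ∩ (u ∩ v) = ∅) : False := by
  have hCv : C ∩ v ⊆ uᶜ := by
    intro x hx hxu
    have : x ∈ C ∩ (u ∩ v) := ⟨hx.1, hxu, hx.2⟩
    rw [hne] at this
    exact this
  by_cases hCA : (C ∩ A).Nonempty
  · -- C \ A is finite and nonempty, contradicting hcon
    have hsub : C \ A ⊆ (Aᶜ \ v) ∪ (C ∩ v) := by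
      intro x hx
      by_cases h : x ∈ v
      · exact Or.inr ⟨hx.1, h⟩
      · exact Or.inl ⟨hx.2, h⟩
    have hfin : (C \ A).Finite := (hv2.union (hu.subset hCv)).subset hsub
    obtain ⟨b, hbC, hbv'⟩ := hbv
    have hbA : b ∉ A := by
      intro h
      have : b ∈ v ∩ A := ⟨hbv', h⟩
      rw [hv1] at this
      exact this
    exact hcon C hC hCA ⟨b, hbC, hbA⟩ hfin
  · -- C is finite
    rw [Set.not_nonempty_iff_eq_empty] at hCA
    have hCu : C ∩ u ⊆ Aᶜ \ v := by
      intro x hx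
      refine ⟨fun hA' => ?_, fun hv' => ?_⟩
      · have : x ∈ C ∩ A := ⟨hx.1, hA'⟩
        rw [hCA] at this
        exact this
      · have : x ∈ C ∩ (u ∩ v) := ⟨hx.1, hx.2, hv'⟩
        rw [hne] at this
        exact this
    have hCfin : C.Finite := by
      have hsub : C ⊆ (Aᶜ \ v) ∪ uᶜ := by
        intro x hx
        rcases hcov hx with h | h
        · exact Or.inl (hCu ⟨hx, h⟩)
        · exact Or.inr (hCv ⟨hx, h⟩)
      exact (hv2.union hu).subset hsub
    exact fin_contra hC hCfin hau ⟨_, hbv.choose_spec⟩ hne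

/-- The auxiliary topology: closed sets are the finite sets, the sets `A ∪ F` with `F` finite,
and the whole space. -/
private def tA {X : Type*} (A : Set X) : TopologicalSpace X where
  IsOpen U := U = ∅ ∨ Uᶜ.Finite ∨ (U ∩ A = ∅ ∧ (Aᶜ \ U).Finite)
  isOpen_univ := Or.inr (Or.inl (by simp))
  isOpen_inter := by
    rintro U V hU hV
    rcases hU with rfl | hU | ⟨hU1, hU2⟩
    · exact Or.inl (by simp)
    · rcases hV with rfl | hV | ⟨hV1, hV2⟩
      · exact Or.inl (by simp)
      · exact Or.inr (Or.inl (by rw [Set.compl_inter]; exact hU.union hV))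
      · refine Or.inr (Or.inr ⟨?_, ?_⟩)
        · apply Set.eq_empty_of_subset_empty
          rw [← hV1]
          exact fun x hx => ⟨hx.1.2, hx.2⟩
        · refine (hU.union hV2).subset ?_
          intro x hx
          by_cases h : x ∈ U
          · exact Or.inr ⟨hx.1, fun hv => hx.2 ⟨h, hv⟩⟩
          · exact Or.inl h
    · rcases hV with rfl | hV | ⟨hV1, hV2⟩
      · exact Or.inl (by simp)
      · refine Or.inr (Or.inr ⟨?_, ?_⟩)
        · apply Set.eq_empty_of_subset_empty
          rw [← hU1]
          exact fun x hx => ⟨hx.1.1, hx.2⟩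
        · refine (hU2.union hV).subset ?_
          intro x hx
          by_cases h : x ∈ V
          · exact Or.inl ⟨hx.1, fun hu => hx.2 ⟨hu, h⟩⟩
          · exact Or.inr h
      · refine Or.inr (Or.inr ⟨?_, ?_⟩)
        · apply Set.eq_empty_of_subset_empty
          rw [← hU1]
          exact fun x hx => ⟨hx.1.1, hx.2⟩
        · refine (hU2.union hV2).subset ?_
          intro x hx
          by_cases h : x ∈ U
          · exact Or.inr ⟨hx.1, fun hv => hx.2 ⟨h, hv⟩⟩
          · exact Or.inl ⟨hx.1, h⟩
  isOpen_sUnion := by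
    intro S hS
    by_cases h1 : ∃ U ∈ S, Uᶜ.Finite
    · obtain ⟨U, hUS, hU⟩ := h1
      exact Or.inr (Or.inl (hU.subset (Set.compl_subset_compl.mpr
        (Set.subset_sUnion_of_mem hUS))))
    · by_cases h2 : ∃ U ∈ S, U ∩ A = ∅ ∧ (Aᶜ \ U).Finite
      · obtain ⟨U, hUS, hU1, hU2⟩ := h2
        refine Or.inr (Or.inr ⟨?_, hU2.subset
          (fun x hx => ⟨hx.1, fun h => hx.2 (Set.subset_sUnion_of_mem hUS h)⟩)⟩)
        apply Set.eq_empty_of_subset_empty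
        rintro x ⟨⟨V, hVS, hxV⟩, hxA⟩
        rcases hS V hVS with rfl | hV | ⟨hV1, _⟩
        · exact hxV
        · exact h1 ⟨V, hVS, hV⟩
        · have : x ∈ V ∩ A := ⟨hxV, hxA⟩
          rw [hV1] at this
          exact this
      · left
        apply Set.eq_empty_of_subset_empty
        rintro x ⟨V, hVS, hxV⟩
        rcases hS V hVS with rfl | hV | hV
        · exact hxV
        · exact h1 ⟨V, hVS, hV⟩
        · exact h2 ⟨V, hVS, hV⟩

private lemma tA_t1 {X : Type*} (A : Set X) : @T1Space X (tA A) := by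
  letI := tA A
  refine ⟨fun x => ?_⟩
  refine ⟨?_⟩
  exact Or.inr (Or.inl (by simp))

private lemma tA_closedA {X : Type*} (A : Set X) : @IsClosed X (tA A) A := by
  letI := tA A
  refine ⟨?_⟩
  exact Or.inr (Or.inr ⟨Set.compl_inter_self A, by rw [Set.diff_self]; exact Set.finite_empty⟩)

theorem stmt17 {X : Type u} [TopologicalSpace X] [T1Space X] :
    (∀ (Y : Type u) (_ : TopologicalSpace Y) (_ : T1Space Y) (f : X → Y),
        (∀ C : Set X, IsPreconnected C → IsPreconnected (f '' C)) → Continuous f) ↔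
    (∀ A : Set X, ¬ IsClosed A →
        ∃ H : Set X, IsPreconnected H ∧ (H ∩ A).Nonempty ∧ (H \ A).Nonempty ∧
          (H \ A).Finite) := by
  constructor
  · -- (a) → (d)
    intro ha A hA
    by_contra hcon
    push_neg at hcon
    -- the T₁ property for the auxiliary topology
    have hT1 : @T1Space X (tA A) := tA_t1 A
    -- the identity map preserves preconnectedness towards `tA A`
    have hpres : ∀ C : Set X, IsPreconnected C → @IsPreconnected X (tA A) (id '' C) := by
      intro C hC
      rw [Set.image_id]
      intro u v hu hv hcov hau hbv
      by_contra hne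
      rw [Set.not_nonempty_iff_eq_empty] at hne
      have hu' : u = ∅ ∨ uᶜ.Finite ∨ (u ∩ A = ∅ ∧ (Aᶜ \ u).Finite) := hu
      have hv' : v = ∅ ∨ vᶜ.Finite ∨ (v ∩ A = ∅ ∧ (Aᶜ \ v).Finite) := hv
      rcases hu' with rfl | hu' | ⟨hu1, hu2⟩
      · obtain ⟨x, -, hx⟩ := hau
        exact hx
      · rcases hv' with rfl | hv' | ⟨hv1, hv2⟩
        · obtain ⟨x, -, hx⟩ := hbv
          exact hx
        · -- both cofinite : C is finite
          have hCfin : C.Finite := by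
            refine (hu'.union hv').subset ?_
            intro x hx
            by_cases h : x ∈ u
            · by_cases h' : x ∈ v
              · exact absurd (hne ▸ ⟨hx, h, h'⟩ : x ∈ (∅ : Set X)) (by simp)
              · exact Or.inr h'
            · exact Or.inl h
          exact absurd (fin_contra hC hCfin hau hbv hne) (by simp)
        · exact absurd (key_contra hcon hC hu' hv1 hv2 hcov hau hbv hne) (by simp)
      · rcases hv' with rfl | hv' | ⟨hv1, hv2⟩
        · obtain ⟨x, -, hx⟩ := hbv
          exact hx
        · refine absurd (key_contra hcon hC hv' hu1 hu2 ?_ hbv hau ?_) (by simp)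
          · rw [Set.union_comm]
            exact hcov
          · rw [Set.inter_comm v u]
            exact hne
        · -- both of the third type : C is finite
          have hCfin : C.Finite := by
            refine (hu2.union hv2).subset ?_
            intro x hx
            have hxA : x ∉ A := by
              intro h
              rcases hcov hx with h' | h'
              · have : x ∈ u ∩ A := ⟨h', h⟩
                rw [hu1] at this
                exact this
              · have : x ∈ v ∩ A := ⟨h', h⟩
                rw [hv1] at this
                exact this
            by_cases h : x ∈ u
            · by_cases h' : x ∈ v
              · exact absurd (hne ▸ ⟨hx, h, h'⟩ : x ∈ (∅ : Set X)) (by simp)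
              · exact Or.inr ⟨hxA, h'⟩
            · exact Or.inl ⟨hxA, h⟩
          exact absurd (fin_contra hC hCfin hau hbv hne) (by simp)
    have hcont := ha X (tA A) hT1 id hpres
    have hAcl : @IsClosed X (tA A) A := tA_closedA A
    have := (@continuous_iff_isClosed X X _ (tA A) id).mp hcont A hAcl
    exact hA (by simpa using this)
  · -- (d) → (a)
    intro hd Y tY t1Y f hpres
    rw [continuous_iff_isClosed]
    intro C hC
    by_contra hncl
    obtain ⟨H, hHpc, ⟨x, hxH, hxA⟩, ⟨z, hzH, hzA⟩, hfin⟩ := hd (f ⁻¹' C) hncl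
    set F := f '' (H \ f ⁻¹' C) with hF
    have hFfin : F.Finite := hfin.image f
    have hFC : ∀ y ∈ F, y ∉ C := by
      rintro y ⟨w, hw, rfl⟩
      exact hw.2
    obtain ⟨y, hyS, hy1, hy2⟩ :=
      hpres H hHpc Fᶜ Cᶜ hFfin.isClosed.isOpen_compl hC.isOpen_compl
        (by
          rintro y ⟨w, hwH, rfl⟩
          by_cases h : f w ∈ C
          · exact Or.inl (fun hmem => hFC _ hmem h)
          · exact Or.inr h)
        ⟨f x, ⟨x, hxH, rfl⟩, fun hmem => hFC _ hmem hxA⟩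
        ⟨f z, ⟨z, hzH, rfl⟩, hzA⟩
    obtain ⟨w, hwH, rfl⟩ := hyS
    by_cases h : f w ∈ C
    · exact hy2 h
    · exact hy1 ⟨w, ⟨hwH, h⟩, rfl⟩
end

section
/- Let X be a T₁ space such that every preserving function from X into any T₁ space is continuous. Then every closed subspace F of X is the topological sum of its connected components; equivalently, every connected component of every closed subspace is relatively open in that subspace. -/
open Filter Topology

/-- The "cofinite plus one distinguished almost-open set `U`" topology. Opens are:
the empty set, cofinite sets, and subsets of `U` that are cofinite in `U`. -/
def cofU {X : Type*} (U : Set X) : TopologicalSpace X where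
  IsOpen O := O = ∅ ∨ Oᶜ.Finite ∨ (O ⊆ U ∧ (U \ O).Finite)
  isOpen_univ := Or.inr (Or.inl (by simp))
  isOpen_inter := by
    intro O₁ O₂ h₁ h₂
    rcases h₁ with rfl | h₁
    · left; simp
    rcases h₂ with rfl | h₂
    · left; simp
    have f₁ : (U \ O₁).Finite := by
      rcases h₁ with h | h
      · exact h.subset fun x hx => hx.2
      · exact h.2
    have f₂ : (U \ O₂).Finite := by
      rcases h₂ with h | h
      · exact h.subset fun x hx => hx.2
      · exact h.2
    have fU : (U \ (O₁ ∩ O₂)).Finite := by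
      rw [Set.diff_inter]; exact f₁.union f₂
    rcases h₁ with h₁ | h₁
    · rcases h₂ with h₂ | h₂
      · right; left; rw [Set.compl_inter]; exact h₁.union h₂
      · right; right; exact ⟨Set.inter_subset_right.trans h₂.1, fU⟩
    · right; right; exact ⟨Set.inter_subset_left.trans h₁.1, fU⟩
  isOpen_sUnion := by
    intro s hs
    by_cases h1 : ∃ O ∈ s, Oᶜ.Finite
    · obtain ⟨O, hOs, hOf⟩ := h1
      right; left
      exact hOf.subset (Set.compl_subset_compl.2 (Set.subset_sUnion_of_mem hOs))
    by_cases h2 : ∃ O ∈ s, O.Nonempty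
    · obtain ⟨O, hOs, hOne⟩ := h2
      rcases hs O hOs with rfl | hO | hO
      · exact absurd hOne (by simp)
      · exact (h1 ⟨O, hOs, hO⟩).elim
      · right; right
        constructor
        · intro x hx
          obtain ⟨O', hO's, hxO'⟩ := hx
          rcases hs O' hO's with rfl | hO' | hO'
          · exact absurd hxO' (Set.notMem_empty x)
          · exact ((h1 ⟨O', hO's, hO'⟩).elim)
          · exact hO'.1 hxO'
        · exact hO.2.subset fun x hx =>
            ⟨hx.1, fun hxU => hx.2 (Set.subset_sUnion_of_mem hOs hxU)⟩
    · left
      push_neg at h2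
      apply Set.eq_empty_iff_forall_notMem.2
      intro x hx
      obtain ⟨O, hOs, hxO⟩ := hx
      rw [h2 O hOs] at hxO
      exact hxO

lemma cofU_isOpen {X : Type*} {U O : Set X} :
    @IsOpen X (cofU U) O ↔ (O = ∅ ∨ Oᶜ.Finite ∨ (O ⊆ U ∧ (U \ O).Finite)) := Iff.rfl

lemma cofU_t1 {X : Type*} (U : Set X) : @T1Space X (cofU U) := by
  letI := cofU U
  refine ⟨fun y => ?_⟩
  rw [← isOpen_compl_iff]
  exact Or.inr (Or.inl (by simp))

/-- Every set whose part outside `U` is finite is compact in `cofU U`. -/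
lemma cofU_compact {X : Type*} (U : Set X) {M : Set X} (hM : (M \ U).Finite) :
    @IsCompact X (cofU U) M := by
  classical
  refine @isCompact_of_finite_subcover X (cofU U) M ?_
  intro ι Us hUs hcov
  rcases M.eq_empty_or_nonempty with rfl | ⟨m₀, hm₀⟩
  · exact ⟨∅, by simp⟩
  obtain ⟨i₀, hi₀⟩ := Set.mem_iUnion.1 (hcov hm₀)
  have hfin : (M \ Us i₀).Finite := by
    rcases cofU_isOpen.1 (hUs i₀) with h | h | h
    · rw [h] at hi₀; exact absurd hi₀ (Set.notMem_empty m₀)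
    · exact h.subset fun x hx => hx.2
    · refine (hM.union h.2).subset ?_
      intro x hx
      by_cases hxU : x ∈ U
      · exact Or.inr ⟨hxU, hx.2⟩
      · exact Or.inl ⟨hx.1, hxU⟩
  have hne : Nonempty ι := ⟨i₀⟩
  have hch : ∀ x ∈ M \ Us i₀, ∃ i, x ∈ Us i := fun x hx => Set.mem_iUnion.1 (hcov hx.1)
  choose! g hg using hch
  refine ⟨insert i₀ (hfin.toFinset.image g), fun x hx => ?_⟩
  by_cases hxi : x ∈ Us i₀
  · exact Set.mem_iUnion₂.2 ⟨i₀, Finset.mem_insert_self _ _, hxi⟩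
  · have hxd : x ∈ M \ Us i₀ := ⟨hx, hxi⟩
    refine Set.mem_iUnion₂.2 ⟨g x, ?_, hg x hxd⟩
    exact Finset.mem_insert_of_mem
      (Finset.mem_image_of_mem g (hfin.mem_toFinset.2 hxd))

/-- Every set meeting `U` in an infinite set is preconnected in `cofU U`. -/
lemma cofU_preconn {X : Type*} (U : Set X) {E : Set X} (hE : (E ∩ U).Infinite) :
    @IsPreconnected X (cofU U) E := by
  intro O₁ O₂ h₁ h₂ _hcov hn₁ hn₂
  have key : ∀ O : Set X, @IsOpen X (cofU U) O → (E ∩ O).Nonempty → (U \ O).Finite := by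
    intro O hO hne
    rcases cofU_isOpen.1 hO with h | h | h
    · obtain ⟨x, hx⟩ := hne
      rw [h] at hx
      exact absurd hx.2 (Set.notMem_empty x)
    · exact h.subset fun x hx => hx.2
    · exact h.2
  have hfin := (key O₁ h₁ hn₁).union (key O₂ h₂ hn₂)
  obtain ⟨x, hx1, hx2⟩ := (hE.diff hfin).nonempty
  refine ⟨x, hx1.1, ?_, ?_⟩
  · by_contra h; exact hx2 (Or.inl ⟨hx1.2, h⟩)
  · by_contra h; exact hx2 (Or.inr ⟨hx1.2, h⟩)

/-- In a T1 space, if a preconnected set meets both an open set and its complement,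
then its intersection with the open set is infinite. -/
lemma crossing_infinite {X : Type*} [TopologicalSpace X] [T1Space X] {S V : Set X}
    (hS : IsPreconnected S) (hV : IsOpen V) (h1 : (S ∩ V).Nonempty) (h2 : (S \ V).Nonempty) :
    (S ∩ V).Infinite := by
  by_contra h
  rw [Set.not_infinite] at h
  have hcl : IsClosed (S ∩ V) := h.isClosed
  have := hS V (S ∩ V)ᶜ hV hcl.isOpen_compl
    (by
      intro x hx
      by_cases hxV : x ∈ V
      · exact Or.inl hxV
      · exact Or.inr fun hc => hxV hc.2)
    h1
    (by
      obtain ⟨a, ha⟩ := h2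
      exact ⟨a, ha.1, fun hc => ha.2 hc.2⟩)
  obtain ⟨x, hxS, hxV, hxc⟩ := this
  exact hxc ⟨hxS, hxV⟩

theorem stmt18 {X : Type u} [TopologicalSpace X] [T1Space X]
    (hPr : ∀ (Y : Type u) (_ : TopologicalSpace Y) (_ : T1Space Y) (f : X → Y),
        Preserving f → Continuous f) :
    ∀ F : Set X, IsClosed F → ∀ x : F, IsOpen (connectedComponent x) := by
  classical
  intro F hF x₀
  by_contra hno
  have hx₀F : (x₀ : X) ∈ F := x₀.2
  set Cv : Set X := connectedComponentIn F (x₀ : X) with hCvdef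
  have hCvF : Cv ⊆ F := connectedComponentIn_subset F _
  have himg : Cv = Subtype.val '' (connectedComponent x₀ : Set F) :=
    connectedComponentIn_eq_image hx₀F
  -- find a point z of the component in the closure of F \ Cv
  obtain ⟨z', hz'C, hz'n⟩ : ∃ z' ∈ connectedComponent x₀, connectedComponent x₀ ∉ 𝓝 z' := by
    by_contra h
    push_neg at h
    exact hno (isOpen_iff_mem_nhds.mpr h)
  set z : X := (z' : X) with hzdef
  have hzCv : z ∈ Cv := by
    rw [himg]; exact ⟨z', hz'C, rfl⟩
  have hzcl : ∀ o : Set X, IsOpen o → z ∈ o → (o ∩ (F \ Cv)).Nonempty := by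
    intro o ho hzo
    by_contra hemp
    rw [Set.not_nonempty_iff_eq_empty] at hemp
    apply hz'n
    rw [show z' = (⟨z, z'.2⟩ : F) from rfl, nhds_subtype_eq_comap]
    refine Filter.mem_comap.2 ⟨o, ho.mem_nhds hzo, ?_⟩
    rintro ⟨w, hwF⟩ hw
    have hwCv : w ∈ Cv := by
      by_contra hc
      have : w ∈ o ∩ (F \ Cv) := ⟨hw, hwF, hc⟩
      rw [hemp] at this
      exact this
    rw [himg] at hwCv
    obtain ⟨s, hsC, hse⟩ := hwCv
    have : (⟨w, hwF⟩ : F) = s := Subtype.ext hse.symm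
    rw [this]
    exact hsC
  obtain ⟨d₀, _, hd₀⟩ := hzcl Set.univ isOpen_univ (Set.mem_univ z)
  have hdz : d₀ ≠ z := fun h => hd₀.2 (h ▸ hzCv)
  set U : Set X := Fᶜ ∪ {z} with hUdef
  have hzU : z ∈ U := Or.inr rfl
  -- the map
  set f : X → X := fun w => if w ∈ F then (if w ∈ Cv then z else d₀) else w with hfdef
  have hfz : ∀ w ∈ Cv, f w = z := by
    intro w hw; simp only [hfdef]; rw [if_pos (hCvF hw), if_pos hw]
  have hfd : ∀ w ∈ F \ Cv, f w = d₀ := by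
    intro w hw; simp only [hfdef]; rw [if_pos hw.1, if_neg hw.2]
  have hfid : ∀ w ∉ F, f w = w := by
    intro w hw; simp only [hfdef]; rw [if_neg hw]
  -- maximality of the component
  have hmax : ∀ S : Set X, IsPreconnected S → S ⊆ F → (S ∩ Cv).Nonempty → S ⊆ Cv := by
    intro S hS hSF ⟨q, hqS, hqCv⟩
    have h1 : S ⊆ connectedComponentIn F q := hS.subset_connectedComponentIn hqS hSF
    have h2 : connectedComponentIn F (x₀ : X) = connectedComponentIn F q :=
      connectedComponentIn_eq (hCvdef ▸ hqCv)
    have h3 : S ⊆ connectedComponentIn F (x₀ : X) := h2.symm ▸ h1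
    exact hCvdef.symm ▸ h3
  -- Preserving
  have hPres : @Preserving X X _ (cofU U) f := by
    constructor
    · intro K _
      refine cofU_compact U ?_
      have : f '' K \ U ⊆ {d₀} := by
        rintro y ⟨⟨k, hk, rfl⟩, hyU⟩
        by_cases hkF : k ∈ F
        · by_cases hkC : k ∈ Cv
          · exact absurd (by rw [hfz k hkC]; exact hzU) hyU
          · rw [hfd k ⟨hkF, hkC⟩]; rfl
        · refine absurd (show f k ∈ U by rw [hfid k hkF]; exact Or.inl hkF) hyU
      exact (Set.finite_singleton d₀).subset this
    · intro S hS
      by_cases hSF : S ⊆ F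
      · by_cases hmeet : (S ∩ Cv).Nonempty
        · have hsub : f '' S ⊆ {z} := by
            rintro _ ⟨s, hs, rfl⟩
            rw [hfz s (hmax S hS hSF hmeet hs)]
            rfl
          exact @Set.Subsingleton.isPreconnected X (cofU U) _
            (Set.subsingleton_singleton.anti hsub)
        · have hsub : f '' S ⊆ {d₀} := by
            rintro _ ⟨s, hs, rfl⟩
            rw [hfd s ⟨hSF hs, fun hc => hmeet ⟨s, hs, hc⟩⟩]
            rfl
          exact @Set.Subsingleton.isPreconnected X (cofU U) _
            (Set.subsingleton_singleton.anti hsub)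
      · -- S has a point outside F
        obtain ⟨a, haS, haF⟩ : ∃ a ∈ S, a ∉ F := by
          by_contra h; push_neg at h; exact hSF h
        have hSFc : S ∩ Fᶜ ⊆ f '' S ∩ U := by
          intro x hx
          exact ⟨⟨x, hx.1, hfid x hx.2⟩, Or.inl hx.2⟩
        by_cases hSF2 : (S ∩ F).Nonempty
        · -- crossing case
          have hinf : (S ∩ Fᶜ).Infinite :=
            crossing_infinite hS hF.isOpen_compl ⟨a, haS, haF⟩
              (by obtain ⟨x, hx1, hx2⟩ := hSF2; exact ⟨x, hx1, fun hc => hc hx2⟩)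
          exact cofU_preconn U ((hinf.mono hSFc))
        · -- S ⊆ Fᶜ
          have hSFc' : S ⊆ Fᶜ := fun x hx => by
            intro hxF; exact hSF2 ⟨x, hx, hxF⟩
          by_cases hsing : S.Subsingleton
          · exact @Set.Subsingleton.isPreconnected X (cofU U) _ (hsing.image f)
          · rw [Set.not_subsingleton_iff] at hsing
            obtain ⟨p, hp, q, hq, hpq⟩ := hsing
            have hinf : (S ∩ {q}ᶜ).Infinite :=
              crossing_infinite hS isOpen_compl_singleton
                ⟨p, hp, hpq⟩ ⟨q, hq, fun hc => hc rfl⟩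
            have hSinf : S.Infinite := hinf.mono (fun x hx => hx.1)
            have : (S ∩ Fᶜ).Infinite := by
              rw [Set.inter_eq_self_of_subset_left hSFc']
              exact hSinf
            exact cofU_preconn U (this.mono hSFc)
  -- conclude
  have hT1 : @T1Space X (cofU U) := cofU_t1 U
  have hcont : @Continuous X X _ (cofU U) f := hPr X (cofU U) hT1 f hPres
  have hUo : @IsOpen X (cofU U) U := cofU_isOpen.2 (Or.inr (Or.inr ⟨subset_rfl, by simp⟩))
  have hpre : f ⁻¹' U = Fᶜ ∪ Cv := by
    ext w
    constructor
    · intro hw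
      by_cases hwF : w ∈ F
      · by_cases hwC : w ∈ Cv
        · exact Or.inr hwC
        · rw [Set.mem_preimage, hfd w ⟨hwF, hwC⟩] at hw
          rcases hw with h | h
          · exact absurd hd₀.1 h
          · exact absurd h hdz
      · exact Or.inl hwF
    · intro hw
      rcases hw with h | h
      · rw [Set.mem_preimage, hfid w h]; exact Or.inl h
      · rw [Set.mem_preimage, hfz w h]; exact hzU
  have hopen : IsOpen (f ⁻¹' U) := @Continuous.isOpen_preimage X X _ (cofU U) f hcont U hUo
  rw [hpre] at hopen
  obtain ⟨w, hw1, hw2⟩ := hzcl _ hopen (show z ∈ Fᶜ ∪ Cv from Or.inr hzCv)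
  rcases hw1 with h | h
  · exact h hw2.1
  · exact hw2.2 h
end
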